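/- arXiv:2101.10494 — 4 statements merged into one kernel-verified Lean document; each statement's English description precedes it below -/
import Mathlib

section
/- (Theorem 1(1), Church–Rosser) Every pair of terms that are equivalent under =_CM have a common rewrite: if F =_CM G then there exists a term U with F ↠_{1-7} U and G ↠_{1-7} U. -/
/-- Terms of the free (quasi-)Cartesian monoid: constants `I, L, R`,
composition `comp` (written `*` in the paper) and pairing `pair`. -/
inductive Term : Type
  | I : Term
  | L : Term
  | R : Term
  | comp : Term → Term → Term
  | pair : Term → Term → Term
  deriving DecidableEq

open Term

/-- The rewrite rules (1)-(7), indexed by their number. -/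
inductive Rule : ℕ → Term → Term → Prop
  | r1 (x y : Term) : Rule 1 (comp L (pair x y)) x
  | r2 (x y : Term) : Rule 2 (comp R (pair x y)) y
  | r3 (x y z : Term) : Rule 3 (comp (pair x y) z) (pair (comp x z) (comp y z))
  | r4 (x : Term) : Rule 4 (comp I x) x
  | r5 (x : Term) : Rule 5 (comp x I) x
  | r6 (x : Term) : Rule 6 (pair (comp L x) (comp R x)) x
  | r7 : Rule 7 (pair L R) I

/-- The congruence generated by associativity of `comp`. -/
inductive AssocEq : Term → Term → Prop
  | assoc (a b c : Term) : AssocEq (comp (comp a b) c) (comp a (comp b c))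
  | refl (a : Term) : AssocEq a a
  | symm {a b : Term} : AssocEq a b → AssocEq b a
  | trans {a b c : Term} : AssocEq a b → AssocEq b c → AssocEq a c
  | comp_congr {a a' b b' : Term} :
      AssocEq a a' → AssocEq b b' → AssocEq (comp a b) (comp a' b')
  | pair_congr {a a' b b' : Term} :
      AssocEq a a' → AssocEq b b' → AssocEq (pair a b) (pair a' b')

/-- One-step rewriting by a rule whose index lies in `J`,
closed under replacement of subterms (monotone closure). -/
inductive Step (J : Set ℕ) : Term → Term → Prop
  | rule {n : ℕ} {x y : Term} : n ∈ J → Rule n x y → Step J x y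
  | comp_left {a a' b : Term} : Step J a a' → Step J (comp a b) (comp a' b)
  | comp_right {a b b' : Term} : Step J b b' → Step J (comp a b) (comp a b')
  | pair_left {a a' b : Term} : Step J a a' → Step J (pair a b) (pair a' b)
  | pair_right {a b b' : Term} : Step J b b' → Step J (pair a b) (pair a b')

/-- One-step rewriting modulo associativity. -/
def StepA (J : Set ℕ) (a b : Term) : Prop :=
  ∃ a' b', AssocEq a a' ∧ Step J a' b' ∧ AssocEq b' b

/-- Many-step rewriting `↠_J`: the monotone reflexive transitive closure of
one-step rewriting by the rules in `J`, modulo associativity. -/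
def Red (J : Set ℕ) (a b : Term) : Prop :=
  ∃ c, Relation.ReflTransGen (StepA J) a c ∧ AssocEq c b

/-- `a` is in normal form w.r.t. the rules in `J` (modulo associativity). -/
def NF (J : Set ℕ) (a : Term) : Prop := ∀ b, ¬ StepA J a b

/-- Rules (1)-(7). -/
def rules17 : Set ℕ := {n | 1 ≤ n ∧ n ≤ 7}
/-- Rules (1)-(5). -/
def rules15 : Set ℕ := {n | 1 ≤ n ∧ n ≤ 5}
/-- Rules (1)-(4). -/
def rules14 : Set ℕ := {n | 1 ≤ n ∧ n ≤ 4}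
/-- Rules (5), (6), (7). -/
def rules567 : Set ℕ := {5, 6, 7}

/-- The congruence `=_CM` generated by the Cartesian monoid axioms (i)-(iv)
and the monoid axioms for `comp` with unit `I`. -/
inductive CMEq : Term → Term → Prop
  | proj_left (f g : Term) : CMEq (comp L (pair f g)) f
  | proj_right (f g : Term) : CMEq (comp R (pair f g)) g
  | lift (f g h : Term) : CMEq (comp (pair f g) h) (pair (comp f h) (comp g h))
  | surj : CMEq (pair L R) I
  | assoc (a b c : Term) : CMEq (comp (comp a b) c) (comp a (comp b c))
  | one_mul (a : Term) : CMEq (comp I a) a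
  | mul_one (a : Term) : CMEq (comp a I) a
  | refl (a : Term) : CMEq a a
  | symm {a b : Term} : CMEq a b → CMEq b a
  | trans {a b c : Term} : CMEq a b → CMEq b c → CMEq a c
  | comp_congr {a a' b b' : Term} :
      CMEq a a' → CMEq b b' → CMEq (comp a b) (comp a' b')
  | pair_congr {a a' b b' : Term} :
      CMEq a a' → CMEq b b' → CMEq (pair a b) (pair a' b')

/-- The congruence `=_CQ` generated by the axioms (i)-(iii)
and the monoid axioms (no surjectivity `⟨L,R⟩ = I`). -/
inductive CQEq : Term → Term → Prop
  | proj_left (f g : Term) : CQEq (comp L (pair f g)) f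
  | proj_right (f g : Term) : CQEq (comp R (pair f g)) g
  | lift (f g h : Term) : CQEq (comp (pair f g) h) (pair (comp f h) (comp g h))
  | assoc (a b c : Term) : CQEq (comp (comp a b) c) (comp a (comp b c))
  | one_mul (a : Term) : CQEq (comp I a) a
  | mul_one (a : Term) : CQEq (comp a I) a
  | refl (a : Term) : CQEq a a
  | symm {a b : Term} : CQEq a b → CQEq b a
  | trans {a b c : Term} : CQEq a b → CQEq b c → CQEq a c
  | comp_congr {a a' b b' : Term} :
      CQEq a a' → CQEq b b' → CQEq (comp a b) (comp a' b')
  | pair_congr {a a' b b' : Term} :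
      CQEq a a' → CQEq b b' → CQEq (pair a b) (pair a' b')

/-- An injective numerical encoding of terms, used to state computability. -/
def encodeTerm : Term → ℕ
  | I => 0
  | L => 1
  | R => 2
  | comp a b => 2 * Nat.pair (encodeTerm a) (encodeTerm b) + 3
  | pair a b => 2 * Nat.pair (encodeTerm a) (encodeTerm b) + 4

/-- A numerical encoding of finite lists of terms. -/
def encodeTermList : List Term → ℕ
  | [] => 0
  | a :: l => Nat.pair (encodeTerm a) (encodeTermList l) + 1

/-- The product of a list of terms (with `I` as the empty product). -/
def listProd : List Term → Term
  | [] => I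
  | a :: l => comp a (listProd l)

/-- `=_CQ` as a setoid. -/
def cqSetoid : Setoid Term :=
  ⟨CQEq, ⟨fun a => CQEq.refl a, fun h => h.symm, fun h₁ h₂ => h₁.trans h₂⟩⟩

/-- The free categorical quasiproduct monoid `CQ = T / =_CQ`. -/
def CQ : Type := Quotient cqSetoid

/-- `=_CM` as a setoid. -/
def cmSetoid : Setoid Term :=
  ⟨CMEq, ⟨fun a => CMEq.refl a, fun h => h.symm, fun h₁ h₂ => h₁.trans h₂⟩⟩

/-- The free Cartesian monoid `CM = T / =_CM`. -/
def CM : Type := Quotient cmSetoid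

/-- The submonoid of `CQ` generated by (the classes of) the members of `B`,
as a set of elements of `CQ`. -/
def genSubmonoidCQ (B : List Term) : Set CQ :=
  {x | ∃ l : List Term, (∀ t ∈ l, t ∈ B) ∧ Quotient.mk cqSetoid (listProd l) = x}

/-- The submonoid of `CM` generated by (the classes of) the members of `B`,
as a set of elements of `CM`. -/
def genSubmonoidCM (B : List Term) : Set CM :=
  {x | ∃ l : List Term, (∀ t ∈ l, t ∈ B) ∧ Quotient.mk cmSetoid (listProd l) = x}

/-- A shift: a product (under `comp`) of copies of `L` and `R`,
with `I` as the empty product. -/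
inductive IsShift : Term → Prop
  | unit : IsShift I
  | left : IsShift L
  | right : IsShift R
  | comp {s t : Term} : IsShift s → IsShift t → IsShift (comp s t)

/-- The CQ normal form (normal form w.r.t. rules (1)-(5)) of `X` is a shift. -/
def nfIsShift (X : Term) : Prop :=
  ∃ N, Red rules15 X N ∧ NF rules15 N ∧ IsShift N

/-- The product `F_0 * ⋯ * F_{n-1}` of the first `n` values of a sequence. -/
def prodTake (f : ℕ → Term) (n : ℕ) : Term := listProd ((List.range n).map f)

/-- `B` covers Cantor space: there is an infinite sequence of members of `B`
such that for each shift `S` some finite initial product composed with `S`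
has a CQ normal form that is not a shift. -/
def Covers (B : List Term) : Prop :=
  ∃ f : ℕ → Term, (∀ n, f n ∈ B) ∧
    ∀ S, IsShift S → ∃ n, ¬ nfIsShift (comp S (prodTake f n))

/-- The shift `S` is bad for `B`: for every finite sequence of members of `B`,
the CQ normal form of `S*F_1*⋯*F_n` is a shift. -/
def BadFor (B : List Term) (S : Term) : Prop :=
  ∀ l : List Term, (∀ t ∈ l, t ∈ B) → nfIsShift (comp S (listProd l))

/-- The length of a shift: the number of occurrences of `L` and `R`. -/
def lenLR : Term → ℕ
  | I => 0
  | L => 1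
  | R => 1
  | comp a b => lenLR a + lenLR b
  | pair a b => lenLR a + lenLR b

/-- `S` is extenuative for `B`: it is bad for `B` and the CQ normal forms of
`S*F_1*⋯*F_k` (for `F_i` in `B`) have unbounded length. -/
def Extenuative (B : List Term) (S : Term) : Prop :=
  BadFor B S ∧ ∀ n : ℕ, ∃ l : List Term, (∀ t ∈ l, t ∈ B) ∧
    ∃ N, Red rules15 (comp S (listProd l)) N ∧ NF rules15 N ∧ n ≤ lenLR N

/-- A term represents a right invertible element of CM. -/
def RightInvCM (F : Term) : Prop := ∃ G, CMEq (comp F G) I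

namespace CR

/-- Normal-form skeletons: words over {L,R} (false = L, true = R) or pairs. -/
inductive NFt : Type
  | word : List Bool → NFt
  | pr : NFt → NFt → NFt
  deriving DecidableEq

open NFt

/-- Smart pairing: performs surjective-pairing collapse (rules 6,7). -/
def smartPair : NFt → NFt → NFt
  | word (false :: w), word (true :: w') =>
      if w = w' then word w else pr (word (false :: w)) (word (true :: w'))
  | x, y => pr x y

lemma sp_spec (x y : NFt) :
    (∃ w, x = word (false :: w) ∧ y = word (true :: w) ∧ smartPair x y = word w) ∨
    ((∀ w, ¬(x = word (false :: w) ∧ y = word (true :: w))) ∧ smartPair x y = pr x y) := by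
  rcases x with w | ⟨x1, x2⟩
  · rcases w with _ | ⟨b, w⟩
    · right; exact ⟨by simp, by simp [smartPair]⟩
    · cases b
      · rcases y with w' | ⟨y1, y2⟩
        · rcases w' with _ | ⟨b', w'⟩
          · right; exact ⟨by simp, by simp [smartPair]⟩
          · cases b'
            · right; exact ⟨by simp, by simp [smartPair]⟩
            · by_cases h : w = w'
              · left; exact ⟨w, by simp [h], by simp [h], by simp [smartPair, h]⟩
              · right
                refine ⟨?_, by simp [smartPair, h]⟩
                rintro u ⟨h1, h2⟩
                simp_all
        · right; exact ⟨by simp, by simp [smartPair]⟩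
      · right; exact ⟨by simp, by simp [smartPair]⟩
  · right; exact ⟨by simp, by simp [smartPair]⟩

def consB : Bool → NFt → NFt
  | b, word w => word (b :: w)
  | false, pr x _ => x
  | true, pr _ y => y

def compW : List Bool → NFt → NFt
  | [], n => n
  | b :: w, n => consB b (compW w n)

def nfComp : NFt → NFt → NFt
  | word w, n => compW w n
  | pr x y, n => smartPair (nfComp x n) (nfComp y n)

def good : NFt → Prop
  | word _ => True
  | pr x y => good x ∧ good y ∧ ∀ w, ¬(x = word (false :: w) ∧ y = word (true :: w))

lemma consB_word (b : Bool) (w : List Bool) : consB b (word w) = word (b :: w) := by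
  cases b <;> rfl

lemma consB_pr_false (x y : NFt) : consB false (pr x y) = x := rfl

lemma consB_pr_true (x y : NFt) : consB true (pr x y) = y := rfl

lemma good_consB {n : NFt} (b : Bool) (h : good n) : good (consB b n) := by
  cases n with
  | word w => rw [consB_word]; trivial
  | pr x y => cases b
              · rw [consB_pr_false]; exact h.1
              · rw [consB_pr_true]; exact h.2.1

lemma good_smartPair {x y : NFt} (hx : good x) (hy : good y) : good (smartPair x y) := by
  rcases sp_spec x y with ⟨w, _, _, he⟩ | ⟨hn, he⟩
  · rw [he]; trivial
  · rw [he]; exact ⟨hx, hy, hn⟩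

lemma good_compW {n : NFt} (w : List Bool) (h : good n) : good (compW w n) := by
  induction w with
  | nil => exact h
  | cons b w ih => exact good_consB b ih

lemma good_nfComp {m n : NFt} (hm : good m) (hn : good n) : good (nfComp m n) := by
  induction m with
  | word w => exact good_compW w hn
  | pr x y ihx ihy => exact good_smartPair (ihx hm.1) (ihy hm.2.1)

lemma consB_false_smartPair (x y : NFt) : consB false (smartPair x y) = x := by
  rcases sp_spec x y with ⟨w, hx, _, he⟩ | ⟨_, he⟩
  · rw [he, hx]; rfl
  · rw [he]; rfl

lemma consB_true_smartPair (x y : NFt) : consB true (smartPair x y) = y := by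
  rcases sp_spec x y with ⟨w, _, hy, he⟩ | ⟨_, he⟩
  · rw [he, hy]; rfl
  · rw [he]; rfl

lemma smartPair_eta {n : NFt} (h : good n) :
    smartPair (consB false n) (consB true n) = n := by
  cases n with
  | word w => simp [consB, smartPair]
  | pr x y =>
    simp only [consB]
    rcases sp_spec x y with ⟨w, hx, hy, _⟩ | ⟨_, he⟩
    · exact absurd ⟨hx, hy⟩ (h.2.2 w)
    · exact he

lemma nfComp_consB (b : Bool) (n m : NFt) :
    nfComp (consB b n) m = consB b (nfComp n m) := by
  cases n with
  | word w => rw [consB_word]; rfl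
  | pr x y =>
    cases b
    · rw [consB_pr_false]
      exact (consB_false_smartPair (nfComp x m) (nfComp y m)).symm
    · rw [consB_pr_true]
      exact (consB_true_smartPair (nfComp x m) (nfComp y m)).symm

lemma nfComp_smartPair {z : NFt} (x y : NFt) (hz : good z) :
    nfComp (smartPair x y) z = smartPair (nfComp x z) (nfComp y z) := by
  rcases sp_spec x y with ⟨w, hx, hy, he⟩ | ⟨_, he⟩
  · rw [he, hx, hy]
    show compW w z = smartPair (consB false (compW w z)) (consB true (compW w z))
    rw [smartPair_eta (good_compW w hz)]
  · rw [he]; rfl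

lemma compW_assoc (w : List Bool) (b c : NFt) :
    nfComp (compW w b) c = compW w (nfComp b c) := by
  induction w with
  | nil => rfl
  | cons x w ih =>
    show nfComp (consB x (compW w b)) c = consB x (compW w (nfComp b c))
    rw [nfComp_consB, ih]

lemma nfComp_assoc {c : NFt} (a b : NFt) (hc : good c) :
    nfComp (nfComp a b) c = nfComp a (nfComp b c) := by
  induction a with
  | word w => exact compW_assoc w b c
  | pr x y ihx ihy =>
    show nfComp (smartPair (nfComp x b) (nfComp y b)) c = _
    rw [nfComp_smartPair _ _ hc, ihx, ihy]
    rfl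

lemma compW_unit (w : List Bool) : compW w (word []) = word w := by
  induction w with
  | nil => rfl
  | cons b w ih =>
    show consB b (compW w (word [])) = word (b :: w)
    rw [ih, consB_word]

lemma nfComp_unit_right {n : NFt} (h : good n) : nfComp n (word []) = n := by
  induction n with
  | word w => exact compW_unit w
  | pr x y ihx ihy =>
    show smartPair (nfComp x (word [])) (nfComp y (word [])) = pr x y
    rw [ihx h.1, ihy h.2.1]
    rcases sp_spec x y with ⟨w, hx, hy, _⟩ | ⟨_, he⟩
    · exact absurd ⟨hx, hy⟩ (h.2.2 w)
    · exact he

/-- Evaluation of terms into normal-form skeletons. -/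
def ev : Term → NFt
  | Term.I => word []
  | Term.L => word [false]
  | Term.R => word [true]
  | Term.comp a b => nfComp (ev a) (ev b)
  | Term.pair a b => smartPair (ev a) (ev b)

lemma good_ev (t : Term) : good (ev t) := by
  induction t with
  | I => trivial
  | L => trivial
  | R => trivial
  | comp a b iha ihb => exact good_nfComp iha ihb
  | pair a b iha ihb => exact good_smartPair iha ihb

lemma ev_eq {F G : Term} (h : CMEq F G) : ev F = ev G := by
  induction h with
  | proj_left f g =>
    show consB false (compW [] (smartPair (ev f) (ev g))) = ev f
    show consB false (smartPair (ev f) (ev g)) = ev f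
    exact consB_false_smartPair _ _
  | proj_right f g => exact consB_true_smartPair (ev f) (ev g)
  | lift f g h => exact nfComp_smartPair (ev f) (ev g) (good_ev h)
  | surj => simp [ev, smartPair]
  | assoc a b c => exact nfComp_assoc (ev a) (ev b) (good_ev c)
  | one_mul a => rfl
  | mul_one a => exact nfComp_unit_right (good_ev a)
  | refl a => rfl
  | symm _ ih => exact ih.symm
  | trans _ _ ih1 ih2 => exact ih1.trans ih2
  | comp_congr _ _ ih1 ih2 => show nfComp _ _ = nfComp _ _; rw [ih1, ih2]
  | pair_congr _ _ ih1 ih2 => show smartPair _ _ = smartPair _ _; rw [ih1, ih2]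

/-- Readback of a letter. -/
def ltr : Bool → Term
  | false => Term.L
  | true => Term.R

/-- Readback of a word. -/
def reifyW : List Bool → Term
  | [] => Term.I
  | [b] => ltr b
  | b :: w => Term.comp (ltr b) (reifyW w)

/-- Readback of a normal-form skeleton. -/
def reify : NFt → Term
  | word w => reifyW w
  | pr x y => Term.pair (reify x) (reify y)

/- Basic `Red` infrastructure. -/

lemma mem17 {n : ℕ} (h1 : 1 ≤ n) (h2 : n ≤ 7) : n ∈ rules17 := ⟨h1, h2⟩

lemma red_refl (J : Set ℕ) (a : Term) : Red J a a :=
  ⟨a, Relation.ReflTransGen.refl, AssocEq.refl a⟩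

lemma red_of_assoc {J : Set ℕ} {a b : Term} (h : AssocEq a b) : Red J a b :=
  ⟨a, Relation.ReflTransGen.refl, h⟩

lemma red_of_step {J : Set ℕ} {a b : Term} (h : Step J a b) : Red J a b :=
  ⟨b, Relation.ReflTransGen.single ⟨a, b, AssocEq.refl a, h, AssocEq.refl b⟩,
   AssocEq.refl b⟩

lemma red_of_rule {J : Set ℕ} {n : ℕ} {a b : Term} (hn : n ∈ J) (h : Rule n a b) :
    Red J a b := red_of_step (Step.rule hn h)

lemma stepA_absorb {J : Set ℕ} {a b c : Term} (e : AssocEq a b) (h : StepA J b c) :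
    StepA J a c := by
  obtain ⟨b', c', e1, s, e2⟩ := h
  exact ⟨b', c', e.trans e1, s, e2⟩

lemma red_trans {J : Set ℕ} {a b c : Term} (h1 : Red J a b) (h2 : Red J b c) :
    Red J a c := by
  obtain ⟨c1, r1, e1⟩ := h1
  obtain ⟨c2, r2, e2⟩ := h2
  rcases (Relation.ReflTransGen.cases_head r2) with rfl | ⟨x, hx, hxc⟩
  · exact ⟨c1, r1, e1.trans e2⟩
  · exact ⟨c2, r1.trans ((Relation.ReflTransGen.single (stepA_absorb e1 hx)).trans hxc),
      e2⟩

lemma red_comp_left {J : Set ℕ} {a a' : Term} (b : Term) (h : Red J a a') :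
    Red J (Term.comp a b) (Term.comp a' b) := by
  obtain ⟨c, r, e⟩ := h
  refine ⟨Term.comp c b, ?_, AssocEq.comp_congr e (AssocEq.refl b)⟩
  refine Relation.ReflTransGen.lift (fun x => Term.comp x b) ?_ _ _ r
  rintro x y ⟨x', y', e1, s, e2⟩
  exact ⟨Term.comp x' b, Term.comp y' b, AssocEq.comp_congr e1 (AssocEq.refl b),
    Step.comp_left s, AssocEq.comp_congr e2 (AssocEq.refl b)⟩

lemma red_comp_right {J : Set ℕ} {b b' : Term} (a : Term) (h : Red J b b') :
    Red J (Term.comp a b) (Term.comp a b') := by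
  obtain ⟨c, r, e⟩ := h
  refine ⟨Term.comp a c, ?_, AssocEq.comp_congr (AssocEq.refl a) e⟩
  refine Relation.ReflTransGen.lift (fun x => Term.comp a x) ?_ _ _ r
  rintro x y ⟨x', y', e1, s, e2⟩
  exact ⟨Term.comp a x', Term.comp a y', AssocEq.comp_congr (AssocEq.refl a) e1,
    Step.comp_right s, AssocEq.comp_congr (AssocEq.refl a) e2⟩

lemma red_pair_congr {J : Set ℕ} {a a' b b' : Term} (h1 : Red J a a') (h2 : Red J b b') :
    Red J (Term.pair a b) (Term.pair a' b') := by
  have l1 : Red J (Term.pair a b) (Term.pair a' b) := by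
    obtain ⟨c, r, e⟩ := h1
    refine ⟨Term.pair c b, ?_, AssocEq.pair_congr e (AssocEq.refl b)⟩
    refine Relation.ReflTransGen.lift (fun x => Term.pair x b) ?_ _ _ r
    rintro x y ⟨x', y', e1, s, e2⟩
    exact ⟨Term.pair x' b, Term.pair y' b, AssocEq.pair_congr e1 (AssocEq.refl b),
      Step.pair_left s, AssocEq.pair_congr e2 (AssocEq.refl b)⟩
  have l2 : Red J (Term.pair a' b) (Term.pair a' b') := by
    obtain ⟨c, r, e⟩ := h2
    refine ⟨Term.pair a' c, ?_, AssocEq.pair_congr (AssocEq.refl a') e⟩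
    refine Relation.ReflTransGen.lift (fun x => Term.pair a' x) ?_ _ _ r
    rintro x y ⟨x', y', e1, s, e2⟩
    exact ⟨Term.pair a' x', Term.pair a' y', AssocEq.pair_congr (AssocEq.refl a') e1,
      Step.pair_right s, AssocEq.pair_congr (AssocEq.refl a') e2⟩
  exact red_trans l1 l2

lemma red_comp_congr {J : Set ℕ} {a a' b b' : Term} (h1 : Red J a a') (h2 : Red J b b') :
    Red J (Term.comp a b) (Term.comp a' b') :=
  red_trans (red_comp_left b h1) (red_comp_right a' h2)

/- Readback reductions. -/

lemma red_pair_smart (x y : NFt) :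
    Red rules17 (Term.pair (reify x) (reify y)) (reify (smartPair x y)) := by
  rcases sp_spec x y with ⟨w, hx, hy, he⟩ | ⟨_, he⟩
  · subst hx; subst hy
    rw [he]
    cases w with
    | nil =>
      show Red rules17 (Term.pair (reifyW [false]) (reifyW [true])) (reifyW [])
      exact red_of_rule (mem17 (by norm_num) (by norm_num)) Rule.r7
    | cons b w =>
      show Red rules17
        (Term.pair (Term.comp Term.L (reifyW (b :: w))) (Term.comp Term.R (reifyW (b :: w))))
        (reifyW (b :: w))
      exact red_of_rule (mem17 (by norm_num) (by norm_num)) (Rule.r6 _)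
  · rw [he]; exact red_refl _ _

lemma red_consB (b : Bool) (n : NFt) :
    Red rules17 (Term.comp (ltr b) (reify n)) (reify (consB b n)) := by
  cases n with
  | word w =>
    rw [consB_word]
    cases w with
    | nil => exact red_of_rule (mem17 (by norm_num) (by norm_num)) (Rule.r5 _)
    | cons c w => exact red_refl _ _
  | pr x y =>
    cases b
    · exact red_of_rule (mem17 (by norm_num) (by norm_num)) (Rule.r1 _ _)
    · exact red_of_rule (mem17 (by norm_num) (by norm_num)) (Rule.r2 _ _)

lemma red_compW (w : List Bool) (n : NFt) :
    Red rules17 (Term.comp (reifyW w) (reify n)) (reify (compW w n)) := by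
  induction w with
  | nil => exact red_of_rule (mem17 (by norm_num) (by norm_num)) (Rule.r4 _)
  | cons b w ih =>
    cases w with
    | nil => exact red_consB b n
    | cons c w =>
      have h1 : AssocEq (Term.comp (reifyW (b :: c :: w)) (reify n))
          (Term.comp (ltr b) (Term.comp (reifyW (c :: w)) (reify n))) :=
        AssocEq.assoc _ _ _
      exact red_trans (red_of_assoc h1)
        (red_trans (red_comp_right _ ih) (red_consB b _))

lemma red_nfComp (m n : NFt) :
    Red rules17 (Term.comp (reify m) (reify n)) (reify (nfComp m n)) := by
  induction m generalizing n with
  | word w => exact red_compW w n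
  | pr x y ihx ihy =>
    have h1 : Red rules17 (Term.comp (Term.pair (reify x) (reify y)) (reify n))
        (Term.pair (Term.comp (reify x) (reify n)) (Term.comp (reify y) (reify n))) :=
      red_of_rule (mem17 (by norm_num) (by norm_num)) (Rule.r3 _ _ _)
    exact red_trans h1 (red_trans (red_pair_congr (ihx n) (ihy n))
      (red_pair_smart _ _))

lemma red_eval (t : Term) : Red rules17 t (reify (ev t)) := by
  induction t with
  | I => exact red_refl _ _
  | L => exact red_refl _ _
  | R => exact red_refl _ _
  | comp a b iha ihb =>
    exact red_trans (red_comp_congr iha ihb) (red_nfComp (ev a) (ev b))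
  | pair a b iha ihb =>
    exact red_trans (red_pair_congr iha ihb) (red_pair_smart (ev a) (ev b))

end CR

/-- Theorem 1(1) (Church-Rosser): terms equivalent under `=_CM`
have a common rewrite under rules (1)-(7). -/
theorem church_rosser (F G : Term) (h : CMEq F G) :
    ∃ U : Term, Red rules17 F U ∧ Red rules17 G U := by
  refine ⟨CR.reify (CR.ev F), CR.red_eval F, ?_⟩
  rw [CR.ev_eq h]
  exact CR.red_eval G
end

section
/- (Theorem 1(2)) The rewrite system (1)-(7) is strongly normalizing with unique normal forms: every sequence of one-step rewrites from a term eventually terminates, and every term rewrites to a unique normal form (unique modulo associativity of *). -/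
open Term

/-! ### Auxiliary development -/

/-- Polynomial interpretation used for termination. -/
def phi : Term → ℕ
  | .I => 2
  | .L => 2
  | .R => 2
  | .comp a b => phi a * phi b
  | .pair a b => phi a + phi b + 1

lemma phi_pos (t : Term) : 2 ≤ phi t := by
  induction t with
  | I => simp [phi]
  | L => simp [phi]
  | R => simp [phi]
  | comp a b iha ihb => calc 2 ≤ 2 * 2 := by norm_num
                             _ ≤ phi a * phi b := Nat.mul_le_mul iha ihb
  | pair a b iha ihb => simp [phi]; omega

lemma phi_assoc {a b : Term} (h : AssocEq a b) : phi a = phi b := by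
  induction h with
  | assoc a b c => simp [phi, Nat.mul_assoc]
  | refl => rfl
  | symm _ ih => omega
  | trans _ _ ih1 ih2 => omega
  | comp_congr _ _ ih1 ih2 => simp [phi, ih1, ih2]
  | pair_congr _ _ ih1 ih2 => simp [phi, ih1, ih2]

lemma phi_rule {n : ℕ} {s t : Term} (h : Rule n s t) : phi t < phi s :=
  match h with
  | .r1 x y => by have := phi_pos x; have := phi_pos y; simp [phi]; nlinarith
  | .r2 x y => by have := phi_pos x; have := phi_pos y; simp [phi]; nlinarith
  | .r3 x y z => by have := phi_pos x; have := phi_pos y; have := phi_pos z; simp [phi]; nlinarith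
  | .r4 x => by have := phi_pos x; simp [phi]; nlinarith
  | .r5 x => by have := phi_pos x; simp [phi]; nlinarith
  | .r6 x => by have := phi_pos x; simp [phi]; nlinarith
  | .r7 => by simp [phi]

lemma phi_step {J : Set ℕ} {a b : Term} (h : Step J a b) : phi b < phi a := by
  induction h with
  | rule _ hr => exact phi_rule hr
  | @comp_left a a' b _ ih =>
      have hb := phi_pos b; simp only [phi]; nlinarith
  | @comp_right a b b' _ ih =>
      have ha := phi_pos a; simp only [phi]; nlinarith
  | pair_left _ ih => simp [phi]; omega
  | pair_right _ ih => simp [phi]; omega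

lemma phi_stepA {J : Set ℕ} {a b : Term} (h : StepA J a b) : phi b < phi a := by
  obtain ⟨a', b', h1, h2, h3⟩ := h
  have e1 := phi_assoc h1
  have e2 := phi_assoc h3
  have e3 := phi_step h2
  omega

lemma sn_lemma : ∀ f : ℕ → Term, ¬ ∀ n : ℕ, StepA rules17 (f n) (f (n + 1)) := by
  intro f h
  have hd : ∀ n, phi (f (n + 1)) < phi (f n) := fun n => phi_stepA (h n)
  have key : ∀ n, phi (f n) + n ≤ phi (f 0) := by
    intro n
    induction n with
    | zero => omega
    | succ k ih => have := hd k; omega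
  have := key (phi (f 0) + 1)
  omega

/-! ### Flattening and redex detection -/

/-- Composition on flattened terms (right-associated append). -/
def fcomp : Term → Term → Term
  | .comp a b, c => .comp a (fcomp b c)
  | a, c => .comp a c

/-- Right-associate all compositions. -/
def flat : Term → Term
  | .comp a b => fcomp (flat a) (flat b)
  | .pair a b => .pair (flat a) (flat b)
  | t => t

def isCompT : Term → Bool
  | .comp _ _ => true
  | _ => false

def isPairT : Term → Bool
  | .pair _ _ => true
  | _ => false

def headBad : Term → Term → Bool
  | .I, _ => true
  | .pair _ _, _ => true
  | _, .I => true
  | .L, .pair _ _ => true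
  | .R, .pair _ _ => true
  | _, _ => false

def isSurj : Term → Term → Bool
  | .L, .R => true
  | .comp .L x, .comp .R y => x == y
  | _, _ => false

def hasRedex : Term → Bool
  | .comp a b => hasRedex a || hasRedex b || headBad a b
  | .pair a b => hasRedex a || hasRedex b || isSurj a b
  | _ => false

def isFlat : Term → Bool
  | .comp a b => !isCompT a && isFlat a && isFlat b
  | .pair a b => isFlat a && isFlat b
  | _ => true

lemma fcomp_assoc (a b c : Term) : fcomp (fcomp a b) c = fcomp a (fcomp b c) := by
  induction a generalizing b c with
  | comp a1 a2 ih1 ih2 => simp [fcomp, ih2]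
  | _ => simp [fcomp]

lemma flat_assoc {a b : Term} (h : AssocEq a b) : flat a = flat b := by
  induction h with
  | assoc a b c => simp [flat, fcomp_assoc]
  | refl => rfl
  | symm _ ih => exact ih.symm
  | trans _ _ ih1 ih2 => exact ih1.trans ih2
  | comp_congr _ _ ih1 ih2 => simp [flat, ih1, ih2]
  | pair_congr _ _ ih1 ih2 => simp [flat, ih1, ih2]

lemma flat_of_isFlat {t : Term} (h : isFlat t = true) : flat t = t := by
  induction t with
  | comp a b iha ihb =>
      simp [isFlat] at h
      obtain ⟨⟨h1, h2⟩, h3⟩ := h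
      rw [flat, iha h2, ihb h3]
      cases a <;> simp_all [fcomp, isCompT]
  | pair a b iha ihb => simp [isFlat] at h; simp [flat, iha h.1, ihb h.2]
  | _ => rfl

lemma hR_fcomp_left {a : Term} (b : Term) (h : hasRedex a = true) :
    hasRedex (fcomp a b) = true := by
  induction a generalizing b with
  | comp a1 a2 ih1 ih2 =>
      simp only [fcomp, hasRedex, Bool.or_eq_true] at h ⊢
      rcases h with (h | h) | h
      · exact Or.inl (Or.inl h)
      · exact Or.inl (Or.inr (ih2 b h))
      · -- headBad a1 a2 = true
        cases a1 with
        | I => exact Or.inr (by simp [headBad])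
        | pair x y => exact Or.inr (by simp [headBad])
        | L =>
            cases a2 with
            | I => exact Or.inl (Or.inr (by simp [fcomp, hasRedex, headBad]))
            | pair x y => exact Or.inl (Or.inr (by simp [fcomp, hasRedex, headBad]))
            | _ => simp [headBad] at h
        | R =>
            cases a2 with
            | I => exact Or.inl (Or.inr (by simp [fcomp, hasRedex, headBad]))
            | pair x y => exact Or.inl (Or.inr (by simp [fcomp, hasRedex, headBad]))
            | _ => simp [headBad] at h
        | comp c d =>
            cases a2 with
            | I => exact Or.inl (Or.inr (by simp [fcomp, hasRedex, headBad]))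
            | _ => simp [headBad] at h
  | I => simp [hasRedex] at h
  | L => simp [hasRedex] at h
  | R => simp [hasRedex] at h
  | pair x y _ _ => simp [fcomp, hasRedex, headBad]

lemma hR_fcomp_right (a : Term) {b : Term} (h : hasRedex b = true) :
    hasRedex (fcomp a b) = true := by
  induction a generalizing b with
  | comp a1 a2 ih1 ih2 => simp [fcomp, hasRedex, ih2 h]
  | I => simp [fcomp, hasRedex, h]
  | L => simp [fcomp, hasRedex, h]
  | R => simp [fcomp, hasRedex, h]
  | pair x y _ _ => simp [fcomp, hasRedex, h]

lemma hR_fcomp_I (a : Term) : hasRedex (fcomp a .I) = true := by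
  induction a with
  | comp a1 a2 ih1 ih2 => simp [fcomp, hasRedex, ih2]
  | I => simp [fcomp, hasRedex, headBad]
  | L => simp [fcomp, hasRedex, headBad]
  | R => simp [fcomp, hasRedex, headBad]
  | pair x y _ _ => simp [fcomp, hasRedex, headBad]

lemma hR_rule {n : ℕ} {s t : Term} (h : Rule n s t) : hasRedex (flat s) = true :=
  match h with
  | .r1 x y => by simp [flat, fcomp, hasRedex, headBad]
  | .r2 x y => by simp [flat, fcomp, hasRedex, headBad]
  | .r3 x y z => by
      show hasRedex (fcomp (.pair (flat x) (flat y)) (flat z)) = true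
      simp [fcomp, hasRedex, headBad]
  | .r4 x => by
      show hasRedex (fcomp .I (flat x)) = true
      simp [fcomp, hasRedex, headBad]
  | .r5 x => hR_fcomp_I (flat x)
  | .r6 x => by simp [flat, fcomp, hasRedex, isSurj]
  | .r7 => by simp [flat, hasRedex, isSurj]

lemma hR_step {J : Set ℕ} {x y : Term} (h : Step J x y) : hasRedex (flat x) = true := by
  induction h with
  | rule _ hr => exact hR_rule hr
  | comp_left _ ih => exact hR_fcomp_left _ ih
  | comp_right _ ih => exact hR_fcomp_right _ ih
  | pair_left _ ih => simp [flat, hasRedex, ih]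
  | pair_right _ ih => simp [flat, hasRedex, ih]

/-- Canonical normal forms. -/
def NFb (t : Term) : Prop := isFlat t = true ∧ hasRedex t = false

lemma NFb_nostep {J : Set ℕ} {s : Term} (h : NFb s) : NF J s := by
  intro u hu
  obtain ⟨s', u', h1, h2, _⟩ := hu
  have := hR_step h2
  rw [← flat_assoc h1, flat_of_isFlat h.1] at this
  rw [h.2] at this
  exact Bool.false_ne_true this

/-! ### The normal form function -/

/-- Normalized pairing. -/
def pairNF : Term → Term → Term
  | .L, .R => .I
  | .comp .L x, .comp .R y =>
      if x = y then x else .pair (.comp .L x) (.comp .R y)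
  | a, b => .pair a b

/-- Normalized composition of normal forms. -/
def compNF : Term → Term → Term
  | .I, b => b
  | .L, b => match b with
      | .I => .L
      | .pair x _ => x
      | b => .comp .L b
  | .R, b => match b with
      | .I => .R
      | .pair _ y => y
      | b => .comp .R b
  | .pair x y, b => pairNF (compNF x b) (compNF y b)
  | .comp a1 a2, b => compNF a1 (compNF a2 b)

/-- The normal form of a term. -/
def nf : Term → Term
  | .comp a b => compNF (nf a) (nf b)
  | .pair a b => pairNF (nf a) (nf b)
  | t => t

lemma pairNF_of_isSurj_false {a b : Term} (h : isSurj a b = false) :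
    pairNF a b = .pair a b := by
  cases a with
  | L => cases b <;> simp_all [isSurj, pairNF]
  | comp a1 a2 =>
      cases a1 <;> cases b <;> try (simp_all [isSurj, pairNF])
      case comp.L.comp b1 b2 =>
        cases b1 <;> simp_all [isSurj, pairNF]
  | _ => cases b <;> simp_all [isSurj, pairNF]

lemma NFb_pair_iff {a b : Term} :
    NFb (.pair a b) ↔ NFb a ∧ NFb b ∧ isSurj a b = false := by
  simp [NFb, isFlat, hasRedex]
  tauto

lemma NFb_comp_parts {a b : Term} (h : NFb (.comp a b)) :
    NFb a ∧ NFb b ∧ headBad a b = false ∧ isCompT a = false := by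
  simp [NFb, isFlat, hasRedex] at h
  simp [NFb]
  tauto

lemma pairNF_spec (a b : Term) :
    (isSurj a b = false ∧ pairNF a b = .pair a b)
  ∨ (a = .L ∧ b = .R ∧ pairNF a b = .I)
  ∨ (∃ x, a = .comp .L x ∧ b = .comp .R x ∧ pairNF a b = x) := by
  cases a with
  | L =>
      cases b with
      | R => exact Or.inr (Or.inl ⟨rfl, rfl, rfl⟩)
      | _ => exact Or.inl ⟨by simp [isSurj], by simp [pairNF]⟩
  | comp a1 a2 =>
      cases a1 with
      | L =>
          cases b with
          | comp b1 b2 =>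
              cases b1 with
              | R =>
                  by_cases h : a2 = b2
                  · subst h
                    exact Or.inr (Or.inr ⟨a2, rfl, rfl, by simp [pairNF]⟩)
                  · exact Or.inl ⟨by simp [isSurj, h], by simp [pairNF, h]⟩
              | _ => exact Or.inl ⟨by simp [isSurj], by simp [pairNF]⟩
          | _ => exact Or.inl ⟨by simp [isSurj], by simp [pairNF]⟩
      | _ => exact Or.inl ⟨by cases b <;> simp [isSurj], by cases b <;> simp [pairNF]⟩
  | _ => exact Or.inl ⟨by cases b <;> simp [isSurj], by cases b <;> simp [pairNF]⟩

lemma NFb_I : NFb .I := by simp [NFb, isFlat, hasRedex]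

lemma NFb_pairNF {a b : Term} (ha : NFb a) (hb : NFb b) : NFb (pairNF a b) := by
  rcases pairNF_spec a b with ⟨h1, h2⟩ | ⟨rfl, rfl, h2⟩ | ⟨x, rfl, rfl, h2⟩ <;> rw [h2]
  · exact NFb_pair_iff.2 ⟨ha, hb, h1⟩
  · exact NFb_I
  · exact (NFb_comp_parts ha).2.1

lemma NFb_comp_elim {a b : Term} (h : NFb (.comp a b)) :
    (a = .L ∨ a = .R) ∧ NFb b ∧ b ≠ .I ∧ isPairT b = false := by
  obtain ⟨h1, h2, h3, h4⟩ := NFb_comp_parts h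
  refine ⟨?_, h2, ?_, ?_⟩
  · cases a <;> simp_all [headBad, isCompT]
  · rintro rfl; cases a <;> simp_all [headBad, isCompT]
  · cases a <;> cases b <;> simp_all [headBad, isCompT, isPairT]

lemma compNF_L_default {b : Term} (h1 : b ≠ .I) (h2 : isPairT b = false) :
    compNF .L b = .comp .L b := by
  cases b <;> simp_all [compNF, isPairT]

lemma compNF_R_default {b : Term} (h1 : b ≠ .I) (h2 : isPairT b = false) :
    compNF .R b = .comp .R b := by
  cases b <;> simp_all [compNF, isPairT]

lemma NFb_compNF {a b : Term} (ha : NFb a) (hb : NFb b) : NFb (compNF a b) := by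
  induction a generalizing b with
  | I => simpa [compNF] using hb
  | L =>
      cases b with
      | I => simpa [compNF] using ha
      | pair x y => exact (NFb_pair_iff.1 hb).1
      | L => simp [NFb, compNF, isFlat, isCompT, hasRedex, headBad]
      | R => simp [NFb, compNF, isFlat, isCompT, hasRedex, headBad]
      | comp b1 b2 =>
          simp only [compNF]
          simp only [NFb, isFlat, isCompT, hasRedex, headBad, Bool.and_eq_true,
            Bool.or_eq_false_iff, Bool.not_eq_true'] at hb ⊢
          tauto
  | R =>
      cases b with
      | I => simpa [compNF] using ha
      | pair x y => exact (NFb_pair_iff.1 hb).2.1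
      | L => simp [NFb, compNF, isFlat, isCompT, hasRedex, headBad]
      | R => simp [NFb, compNF, isFlat, isCompT, hasRedex, headBad]
      | comp b1 b2 =>
          simp only [compNF]
          simp only [NFb, isFlat, isCompT, hasRedex, headBad, Bool.and_eq_true,
            Bool.or_eq_false_iff, Bool.not_eq_true'] at hb ⊢
          tauto
  | pair x y ihx ihy =>
      obtain ⟨hx, hy, _⟩ := NFb_pair_iff.1 ha
      exact NFb_pairNF (ihx hx hb) (ihy hy hb)
  | comp a1 a2 ih1 ih2 =>
      obtain ⟨h1, h2, _, _⟩ := NFb_comp_parts ha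
      exact ih1 h1 (ih2 h2 hb)

lemma compNF_L_pairNF {u v : Term} (hu : NFb u) (hv : NFb v) :
    compNF .L (pairNF u v) = u := by
  rcases pairNF_spec u v with ⟨h1, h2⟩ | ⟨rfl, rfl, h2⟩ | ⟨x, rfl, rfl, h2⟩ <;> rw [h2]
  · rfl
  · rfl
  · obtain ⟨_, _, h3, h4⟩ := NFb_comp_elim hu
    exact compNF_L_default h3 h4

lemma compNF_R_pairNF {u v : Term} (hu : NFb u) (hv : NFb v) :
    compNF .R (pairNF u v) = v := by
  rcases pairNF_spec u v with ⟨h1, h2⟩ | ⟨rfl, rfl, h2⟩ | ⟨x, rfl, rfl, h2⟩ <;> rw [h2]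
  · rfl
  · rfl
  · obtain ⟨_, _, h3, h4⟩ := NFb_comp_elim hv
    exact compNF_R_default h3 h4

lemma compNF_I_right {x : Term} (h : NFb x) : compNF x .I = x := by
  induction x with
  | I => rfl
  | L => rfl
  | R => rfl
  | pair u v ihu ihv =>
      obtain ⟨hu, hv, hs⟩ := NFb_pair_iff.1 h
      show pairNF (compNF u .I) (compNF v .I) = .pair u v
      rw [ihu hu, ihv hv, pairNF_of_isSurj_false hs]
  | comp a1 a2 ih1 ih2 =>
      obtain ⟨h1, h2, h3, h4⟩ := NFb_comp_elim h
      show compNF a1 (compNF a2 .I) = .comp a1 a2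
      rw [ih2 h2]
      rcases h1 with rfl | rfl
      · exact compNF_L_default h3 h4
      · exact compNF_R_default h3 h4

lemma pairNF_LR {x : Term} (h : NFb x) :
    pairNF (compNF .L x) (compNF .R x) = x := by
  cases x with
  | I => rfl
  | L => rfl
  | R => rfl
  | comp a b => simp [compNF, pairNF]
  | pair u v =>
      obtain ⟨_, _, hs⟩ := NFb_pair_iff.1 h
      show pairNF u v = .pair u v
      exact pairNF_of_isSurj_false hs

lemma compNF_pairNF {u v c : Term} (hu : NFb u) (hv : NFb v) (hc : NFb c) :
    compNF (pairNF u v) c = pairNF (compNF u c) (compNF v c) := by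
  rcases pairNF_spec u v with ⟨h1, h2⟩ | ⟨rfl, rfl, h2⟩ | ⟨x, rfl, rfl, h2⟩ <;> rw [h2]
  · rfl
  · show c = pairNF (compNF .L c) (compNF .R c)
    exact (pairNF_LR hc).symm
  · show compNF x c = pairNF (compNF .L (compNF x c)) (compNF .R (compNF x c))
    exact (pairNF_LR (NFb_compNF (NFb_comp_parts hu).2.1 hc)).symm

lemma compNF_assoc (a : Term) : ∀ b c : Term, NFb a → NFb b → NFb c →
    compNF (compNF a b) c = compNF a (compNF b c) := by
  induction a with
  | I => intro b c _ _ _; rfl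
  | L =>
      intro b c _ hb _
      cases b with
      | I => simp [compNF]
      | pair x y =>
          obtain ⟨hx, hy, _⟩ := NFb_pair_iff.1 hb
          show compNF x c = compNF .L (pairNF (compNF x c) (compNF y c))
          exact (compNF_L_pairNF (NFb_compNF hx ‹NFb c›) (NFb_compNF hy ‹NFb c›)).symm
      | L => rfl
      | R => rfl
      | comp b1 b2 => rfl
  | R =>
      intro b c _ hb _
      cases b with
      | I => simp [compNF]
      | pair x y =>
          obtain ⟨hx, hy, _⟩ := NFb_pair_iff.1 hb
          show compNF y c = compNF .R (pairNF (compNF x c) (compNF y c))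
          exact (compNF_R_pairNF (NFb_compNF hx ‹NFb c›) (NFb_compNF hy ‹NFb c›)).symm
      | L => rfl
      | R => rfl
      | comp b1 b2 => rfl
  | pair x y ihx ihy =>
      intro b c ha hb hc
      obtain ⟨hx, hy, _⟩ := NFb_pair_iff.1 ha
      show compNF (pairNF (compNF x b) (compNF y b)) c
          = pairNF (compNF x (compNF b c)) (compNF y (compNF b c))
      rw [compNF_pairNF (NFb_compNF hx hb) (NFb_compNF hy hb) hc,
          ihx b c hx hb hc, ihy b c hy hb hc]
  | comp a1 a2 ih1 ih2 =>
      intro b c ha hb hc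
      obtain ⟨h1, h2, _, _⟩ := NFb_comp_parts ha
      show compNF (compNF a1 (compNF a2 b)) c = compNF a1 (compNF a2 (compNF b c))
      rw [ih1 (compNF a2 b) c h1 (NFb_compNF h2 hb) hc, ih2 b c h2 hb hc]

lemma NFb_nf (t : Term) : NFb (nf t) := by
  induction t with
  | I => exact NFb_I
  | L => simp [nf, NFb, isFlat, hasRedex]
  | R => simp [nf, NFb, isFlat, hasRedex]
  | comp a b iha ihb => exact NFb_compNF iha ihb
  | pair a b iha ihb => exact NFb_pairNF iha ihb

lemma nf_assocEq {a b : Term} (h : AssocEq a b) : nf a = nf b := by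
  induction h with
  | assoc a b c =>
      show compNF (compNF (nf a) (nf b)) (nf c) = compNF (nf a) (compNF (nf b) (nf c))
      exact compNF_assoc (nf a) (nf b) (nf c) (NFb_nf a) (NFb_nf b) (NFb_nf c)
  | refl => rfl
  | symm _ ih => exact ih.symm
  | trans _ _ ih1 ih2 => exact ih1.trans ih2
  | comp_congr _ _ ih1 ih2 => show compNF _ _ = compNF _ _; rw [ih1, ih2]
  | pair_congr _ _ ih1 ih2 => show pairNF _ _ = pairNF _ _; rw [ih1, ih2]

lemma nf_rule {n : ℕ} {s t : Term} (h : Rule n s t) : nf s = nf t :=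
  match h with
  | .r1 x y => compNF_L_pairNF (NFb_nf x) (NFb_nf y)
  | .r2 x y => compNF_R_pairNF (NFb_nf x) (NFb_nf y)
  | .r3 x y z => compNF_pairNF (NFb_nf x) (NFb_nf y) (NFb_nf z)
  | .r4 x => rfl
  | .r5 x => compNF_I_right (NFb_nf x)
  | .r6 x => pairNF_LR (NFb_nf x)
  | .r7 => rfl

lemma nf_step {J : Set ℕ} {a b : Term} (h : Step J a b) : nf a = nf b := by
  induction h with
  | rule _ hr => exact nf_rule hr
  | comp_left _ ih => show compNF _ _ = compNF _ _; rw [ih]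
  | comp_right _ ih => show compNF _ _ = compNF _ _; rw [ih]
  | pair_left _ ih => show pairNF _ _ = pairNF _ _; rw [ih]
  | pair_right _ ih => show pairNF _ _ = pairNF _ _; rw [ih]

lemma nf_stepA {J : Set ℕ} {a b : Term} (h : StepA J a b) : nf a = nf b := by
  obtain ⟨a', b', h1, h2, h3⟩ := h
  rw [nf_assocEq h1, nf_step h2, nf_assocEq h3]

lemma nf_red {J : Set ℕ} {a b : Term} (h : Red J a b) : nf a = nf b := by
  obtain ⟨c, h1, h2⟩ := h
  have key : ∀ {x y : Term}, Relation.ReflTransGen (StepA J) x y → nf x = nf y := by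
    intro x y hxy
    induction hxy with
    | refl => rfl
    | tail _ hs ih => exact ih.trans (nf_stepA hs)
  exact (key h1).trans (nf_assocEq h2)

/-! ### Reduction machinery -/

lemma stepA_absorb_left {J : Set ℕ} {a b c : Term} (h : AssocEq a b)
    (hs : StepA J b c) : StepA J a c := by
  obtain ⟨x, y, h1, h2, h3⟩ := hs
  exact ⟨x, y, h.trans h1, h2, h3⟩

lemma red_of_assocEq {J : Set ℕ} {a b : Term} (h : AssocEq a b) : Red J a b :=
  ⟨a, Relation.ReflTransGen.refl, h⟩

lemma red_refl {J : Set ℕ} (a : Term) : Red J a a := red_of_assocEq (AssocEq.refl a)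

lemma red_of_stepA {J : Set ℕ} {a b : Term} (h : StepA J a b) : Red J a b :=
  ⟨b, Relation.ReflTransGen.single h, AssocEq.refl b⟩

lemma red_of_step {J : Set ℕ} {a b : Term} (h : Step J a b) : Red J a b :=
  red_of_stepA ⟨a, b, AssocEq.refl a, h, AssocEq.refl b⟩

lemma red_trans {J : Set ℕ} {a b c : Term} (h1 : Red J a b) (h2 : Red J b c) :
    Red J a c := by
  obtain ⟨d, r1, e1⟩ := h1
  obtain ⟨e, r2, e2⟩ := h2
  rcases (Relation.ReflTransGen.cases_head r2) with rfl | ⟨x, hx, rx⟩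
  · exact ⟨d, r1, e1.trans e2⟩
  · exact ⟨e, r1.trans ((Relation.ReflTransGen.single (stepA_absorb_left e1 hx)).trans rx),
      e2⟩

lemma stepA_comp_left {J : Set ℕ} {a a' : Term} (b : Term) (h : StepA J a a') :
    StepA J (.comp a b) (.comp a' b) := by
  obtain ⟨x, y, h1, h2, h3⟩ := h
  exact ⟨.comp x b, .comp y b, AssocEq.comp_congr h1 (AssocEq.refl b),
    Step.comp_left h2, AssocEq.comp_congr h3 (AssocEq.refl b)⟩

lemma stepA_comp_right {J : Set ℕ} (a : Term) {b b' : Term} (h : StepA J b b') :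
    StepA J (.comp a b) (.comp a b') := by
  obtain ⟨x, y, h1, h2, h3⟩ := h
  exact ⟨.comp a x, .comp a y, AssocEq.comp_congr (AssocEq.refl a) h1,
    Step.comp_right h2, AssocEq.comp_congr (AssocEq.refl a) h3⟩

lemma stepA_pair_left {J : Set ℕ} {a a' : Term} (b : Term) (h : StepA J a a') :
    StepA J (.pair a b) (.pair a' b) := by
  obtain ⟨x, y, h1, h2, h3⟩ := h
  exact ⟨.pair x b, .pair y b, AssocEq.pair_congr h1 (AssocEq.refl b),
    Step.pair_left h2, AssocEq.pair_congr h3 (AssocEq.refl b)⟩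

lemma stepA_pair_right {J : Set ℕ} (a : Term) {b b' : Term} (h : StepA J b b') :
    StepA J (.pair a b) (.pair a b') := by
  obtain ⟨x, y, h1, h2, h3⟩ := h
  exact ⟨.pair a x, .pair a y, AssocEq.pair_congr (AssocEq.refl a) h1,
    Step.pair_right h2, AssocEq.pair_congr (AssocEq.refl a) h3⟩

lemma red_comp_left {J : Set ℕ} {a a' : Term} (b : Term) (h : Red J a a') :
    Red J (.comp a b) (.comp a' b) := by
  obtain ⟨c, r, e⟩ := h
  exact ⟨.comp c b, Relation.ReflTransGen.lift (fun x => Term.comp x b)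
    (fun _ _ hs => stepA_comp_left b hs) _ _ r, AssocEq.comp_congr e (AssocEq.refl b)⟩

lemma red_comp_right {J : Set ℕ} (a : Term) {b b' : Term} (h : Red J b b') :
    Red J (.comp a b) (.comp a b') := by
  obtain ⟨c, r, e⟩ := h
  exact ⟨.comp a c, Relation.ReflTransGen.lift (fun x => Term.comp a x)
    (fun _ _ hs => stepA_comp_right a hs) _ _ r, AssocEq.comp_congr (AssocEq.refl a) e⟩

lemma red_pair_left {J : Set ℕ} {a a' : Term} (b : Term) (h : Red J a a') :
    Red J (.pair a b) (.pair a' b) := by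
  obtain ⟨c, r, e⟩ := h
  exact ⟨.pair c b, Relation.ReflTransGen.lift (fun x => Term.pair x b)
    (fun _ _ hs => stepA_pair_left b hs) _ _ r, AssocEq.pair_congr e (AssocEq.refl b)⟩

lemma red_pair_right {J : Set ℕ} (a : Term) {b b' : Term} (h : Red J b b') :
    Red J (.pair a b) (.pair a b') := by
  obtain ⟨c, r, e⟩ := h
  exact ⟨.pair a c, Relation.ReflTransGen.lift (fun x => Term.pair a x)
    (fun _ _ hs => stepA_pair_right a hs) _ _ r, AssocEq.pair_congr (AssocEq.refl a) e⟩

lemma mem_rules17 {n : ℕ} (h1 : 1 ≤ n) (h2 : n ≤ 7) : n ∈ rules17 := ⟨h1, h2⟩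

lemma red_rule17 {n : ℕ} {s t : Term} (h1 : 1 ≤ n) (h2 : n ≤ 7) (h : Rule n s t) :
    Red rules17 s t :=
  red_of_step (Step.rule (mem_rules17 h1 h2) h)

lemma red_pairNF (a b : Term) : Red rules17 (.pair a b) (pairNF a b) := by
  rcases pairNF_spec a b with ⟨_, h2⟩ | ⟨rfl, rfl, h2⟩ | ⟨x, rfl, rfl, h2⟩ <;> rw [h2]
  · exact red_refl _
  · exact red_rule17 (by norm_num) (by norm_num) Rule.r7
  · exact red_rule17 (by norm_num) (by norm_num) (Rule.r6 x)

lemma red_compNF (a : Term) : ∀ b : Term, NFb a → NFb b →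
    Red rules17 (.comp a b) (compNF a b) := by
  induction a with
  | I => exact fun b _ _ => red_rule17 (by norm_num) (by norm_num) (Rule.r4 b)
  | L =>
      intro b _ _
      cases b with
      | I => exact red_rule17 (by norm_num) (by norm_num) (Rule.r5 .L)
      | pair x y => exact red_rule17 (by norm_num) (by norm_num) (Rule.r1 x y)
      | L => exact red_refl _
      | R => exact red_refl _
      | comp b1 b2 => exact red_refl _
  | R =>
      intro b _ _
      cases b with
      | I => exact red_rule17 (by norm_num) (by norm_num) (Rule.r5 .R)
      | pair x y => exact red_rule17 (by norm_num) (by norm_num) (Rule.r2 x y)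
      | L => exact red_refl _
      | R => exact red_refl _
      | comp b1 b2 => exact red_refl _
  | pair x y ihx ihy =>
      intro b ha hb
      obtain ⟨hx, hy, _⟩ := NFb_pair_iff.1 ha
      have s1 : Red rules17 (.comp (.pair x y) b) (.pair (.comp x b) (.comp y b)) :=
        red_rule17 (by norm_num) (by norm_num) (Rule.r3 x y b)
      have s2 := red_pair_left (Term.comp y b) (ihx b hx hb)
      have s3 := red_pair_right (compNF x b) (ihy b hy hb)
      have s4 := red_pairNF (compNF x b) (compNF y b)
      exact red_trans s1 (red_trans s2 (red_trans s3 s4))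
  | comp a1 a2 ih1 ih2 =>
      intro b ha hb
      obtain ⟨h1, h2, _, _⟩ := NFb_comp_parts ha
      have s1 : Red rules17 (.comp (.comp a1 a2) b) (.comp a1 (.comp a2 b)) :=
        red_of_assocEq (AssocEq.assoc a1 a2 b)
      have s2 := red_comp_right a1 (ih2 b h2 hb)
      have s3 := ih1 (compNF a2 b) h1 (NFb_compNF h2 hb)
      exact red_trans s1 (red_trans s2 s3)

lemma red_nf (t : Term) : Red rules17 t (nf t) := by
  induction t with
  | I => exact red_refl _
  | L => exact red_refl _
  | R => exact red_refl _
  | comp a b iha ihb =>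
      have s1 := red_comp_left b iha
      have s2 := red_comp_right (nf a) ihb
      have s3 := red_compNF (nf a) (nf b) (NFb_nf a) (NFb_nf b)
      exact red_trans s1 (red_trans s2 s3)
  | pair a b iha ihb =>
      have s1 := red_pair_left b iha
      have s2 := red_pair_right (nf a) ihb
      have s3 := red_pairNF (nf a) (nf b)
      exact red_trans s1 (red_trans s2 s3)

lemma nf_fixed {J : Set ℕ} {v : Term} (hnf : NF J v) (h : Red J v (nf v)) :
    AssocEq v (nf v) := by
  obtain ⟨c, r, e⟩ := h
  rcases Relation.ReflTransGen.cases_head r with rfl | ⟨x, hx, _⟩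
  · exact e
  · exact absurd hx (hnf x)

/-- Theorem 1(2): the rewrite system (1)-(7) is strongly normalizing (no
infinite sequence of one-step rewrites) and every term rewrites to a normal
form that is unique modulo associativity. -/
theorem strong_normalization_and_unique_normal_forms :
    (∀ f : ℕ → Term, ¬ ∀ n : ℕ, StepA rules17 (f n) (f (n + 1))) ∧
    (∀ t : Term, ∃ u : Term, Red rules17 t u ∧ NF rules17 u ∧
      ∀ v : Term, Red rules17 t v → NF rules17 v → AssocEq v u) := by
  constructor
  · exact sn_lemma
  · intro t
    refine ⟨nf t, red_nf t, NFb_nostep (NFb_nf t), ?_⟩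
    intro v hv hnfv
    have h1 : nf t = nf v := nf_red hv
    have h2 : AssocEq v (nf v) := nf_fixed hnfv (red_nf v)
    rw [← h1] at h2
    exact h2
end

section
/- (Theorem 2, simplicity of CM) If terms F and G have distinct normal forms with respect to the rewrite rules (1)-(7) (equivalently, F ≠ G in the free Cartesian monoid), then there exist terms H and K such that H*F*K =_CM L and H*G*K =_CM R. -/
open Term

namespace CMProof
open Term

/-- letter: `false ↦ L`, `true ↦ R`. -/
def ltr : Bool → Term := fun b => bif b then Term.R else Term.L

def wordTerm : List Bool → Term
  | [] => Term.I
  | c :: w => comp (ltr c) (wordTerm w)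

/-- projection of a letter on a pair -/
lemma ltr_pair (c : Bool) (a b : Term) :
    CMEq (comp (ltr c) (Term.pair a b)) (cond c b a) := by
  cases c
  · exact CMEq.proj_left a b
  · exact CMEq.proj_right a b

/-- ⟨L∘x, R∘x⟩ = x -/
lemma pair_LR (x : Term) :
    CMEq (Term.pair (comp Term.L x) (comp Term.R x)) x := by
  refine ((CMEq.lift Term.L Term.R x).symm).trans ?_
  exact (CMEq.comp_congr CMEq.surj (CMEq.refl x)).trans (CMEq.one_mul x)

lemma word_append (w w' : List Bool) :
    CMEq (wordTerm (w ++ w')) (comp (wordTerm w) (wordTerm w')) := by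
  induction w with
  | nil => exact (CMEq.one_mul _).symm
  | cons c w ih =>
      refine (CMEq.comp_congr (CMEq.refl (ltr c)) ih).trans ?_
      exact (CMEq.assoc _ _ _).symm

/-- embed `S` at address `s` in a tree (other branches `I`). -/
def put (S : Term) : List Bool → Term
  | [] => S
  | c :: s => bif c then Term.pair Term.I (put S s) else Term.pair (put S s) Term.I

lemma ltr_put (S : Term) (c : Bool) (s : List Bool) :
    CMEq (comp (ltr c) (put S (c :: s))) (put S s) := by
  cases c
  · exact CMEq.proj_left _ _
  · exact CMEq.proj_right _ _

lemma E1 (s : List Bool) (S : Term) :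
    CMEq (comp (wordTerm s.reverse) (put S s)) S := by
  induction s generalizing S with
  | nil => exact CMEq.one_mul S
  | cons c s ih =>
      have h1 : CMEq (comp (wordTerm ((c :: s).reverse)) (put S (c :: s)))
          (comp (comp (wordTerm s.reverse) (wordTerm [c])) (put S (c :: s))) := by
        have : (c :: s).reverse = s.reverse ++ [c] := by simp
        rw [this]
        exact CMEq.comp_congr (word_append s.reverse [c]) (CMEq.refl _)
      refine h1.trans ?_
      refine (CMEq.assoc _ _ _).trans ?_
      refine (CMEq.comp_congr (CMEq.refl _) ?_).trans (ih S)
      -- comp (wordTerm [c]) (put S (c::s)) = comp (comp (ltr c) I) (put S (c::s))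
      refine (CMEq.assoc _ _ _).trans ?_
      refine (CMEq.comp_congr (CMEq.refl _) (CMEq.one_mul _)).trans ?_
      exact ltr_put S c s

/-- embed `S` at address `s` and `T` at address `t` (for incomparable `s,t`). -/
def put2 (S T : Term) : List Bool → List Bool → Term
  | false :: s, false :: t => Term.pair (put2 S T s t) Term.I
  | true :: s, true :: t => Term.pair Term.I (put2 S T s t)
  | false :: s, true :: t => Term.pair (put S s) (put T t)
  | true :: s, false :: t => Term.pair (put T t) (put S s)
  | [], _ => Term.I
  | _ :: _, [] => Term.I

lemma E2a (S T : Term) : ∀ (s t : List Bool), ¬ (s <+: t) → ¬ (t <+: s) →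
    CMEq (comp (wordTerm s.reverse) (put2 S T s t)) S := by
  intro s
  induction s with
  | nil => intro t hst _; exact absurd (List.nil_prefix) hst
  | cons c s ih =>
      intro t hst hts
      cases t with
      | nil => exact absurd (List.nil_prefix) hts
      | cons d t =>
        have h1 : CMEq (comp (wordTerm ((c :: s).reverse)) (put2 S T (c :: s) (d :: t)))
            (comp (wordTerm s.reverse) (comp (ltr c) (put2 S T (c :: s) (d :: t)))) := by
          have : (c :: s).reverse = s.reverse ++ [c] := by simp
          rw [this]
          refine (CMEq.comp_congr (word_append s.reverse [c]) (CMEq.refl _)).trans ?_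
          refine (CMEq.assoc _ _ _).trans ?_
          refine CMEq.comp_congr (CMEq.refl _) ?_
          exact (CMEq.assoc _ _ _).trans (CMEq.comp_congr (CMEq.refl _) (CMEq.one_mul _))
        refine h1.trans ?_
        cases c <;> cases d
        · -- false false
          refine (CMEq.comp_congr (CMEq.refl _) (CMEq.proj_left _ _)).trans ?_
          refine ih t ?_ ?_
          · exact fun hp => hst (List.cons_prefix_cons.mpr ⟨rfl, hp⟩)
          · exact fun hp => hts (List.cons_prefix_cons.mpr ⟨rfl, hp⟩)
        · -- false true : put2 = pair (put S s) (put T t)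
          refine (CMEq.comp_congr (CMEq.refl _) (CMEq.proj_left _ _)).trans ?_
          exact E1 s S
        · -- true false
          refine (CMEq.comp_congr (CMEq.refl _) (CMEq.proj_right _ _)).trans ?_
          exact E1 s S
        · -- true true
          refine (CMEq.comp_congr (CMEq.refl _) (CMEq.proj_right _ _)).trans ?_
          refine ih t ?_ ?_
          · exact fun hp => hst (List.cons_prefix_cons.mpr ⟨rfl, hp⟩)
          · exact fun hp => hts (List.cons_prefix_cons.mpr ⟨rfl, hp⟩)

lemma put2_swap (S T : Term) : ∀ (s t : List Bool), put2 S T s t = put2 T S t s := by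
  intro s
  induction s with
  | nil => intro t; cases t <;> simp [put2]
  | cons c s ih =>
      intro t
      cases t with
      | nil => simp [put2]
      | cons d t => cases c <;> cases d <;> simp [put2, ih t]

lemma E2b (S T : Term) (s t : List Bool) (hst : ¬ (s <+: t)) (hts : ¬ (t <+: s)) :
    CMEq (comp (wordTerm t.reverse) (put2 S T s t)) T := by
  rw [put2_swap]
  exact E2a T S t s hts hst


lemma not_prefix_of_lt {α β : List Bool} (hlen : α.length < β.length) :
    ¬ (α ++ [!β[α.length]] <+: β ++ [!β[α.length]]) ∧
    ¬ (β ++ [!β[α.length]] <+: α ++ [!β[α.length]]) := by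
  constructor
  · intro hp
    have h1 := hp.getElem (i := α.length) (by simp)
    rw [List.getElem_concat_length rfl (by simp)] at h1
    rw [List.getElem_append_left hlen] at h1
    simp at h1
  · intro hp
    have := hp.length_le
    simp at this
    omega

lemma exists_sep_bit (α β : List Bool) (h : α ≠ β) :
    ∃ b : Bool, ¬ (α ++ [b] <+: β ++ [b]) ∧ ¬ (β ++ [b] <+: α ++ [b]) := by
  rcases lt_trichotomy α.length β.length with hlt | heq | hgt
  · exact ⟨_, not_prefix_of_lt hlt⟩
  · refine ⟨true, ?_, ?_⟩ <;> intro hp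
    · exact h (List.append_inj_left (hp.eq_of_length (by simp [heq])) heq)
    · exact h (List.append_inj_left (hp.eq_of_length (by simp [heq])) heq.symm).symm
  · exact ⟨_, ((not_prefix_of_lt hgt).symm : _)⟩

lemma sep_words (u v : List Bool) (huv : u ≠ v) :
    ∃ H K : Term, CMEq (comp H (comp (wordTerm u) K)) Term.L ∧
      CMEq (comp H (comp (wordTerm v) K)) Term.R := by
  obtain ⟨b, hst, hts⟩ := exists_sep_bit u.reverse v.reverse
    (fun e => huv (by simpa using congrArg List.reverse e))
  refine ⟨ltr b, put2 Term.L Term.R (u.reverse ++ [b]) (v.reverse ++ [b]), ?_, ?_⟩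
  · refine CMEq.trans ?_ (E2a Term.L Term.R _ _ hst hts)
    have : (u.reverse ++ [b]).reverse = b :: u := by simp
    rw [this]
    exact (CMEq.assoc _ _ _).symm
  · refine CMEq.trans ?_ (E2b Term.L Term.R _ _ hst hts)
    have : (v.reverse ++ [b]).reverse = b :: v := by simp
    rw [this]
    exact (CMEq.assoc _ _ _).symm


/-- normal shapes: words over {L,R} (ending in I) and pairs thereof. -/
inductive Nrm : Term → Prop
  | word (w : List Bool) : Nrm (wordTerm w)
  | pair {a b : Term} : Nrm a → Nrm b → Nrm (Term.pair a b)

lemma ltr_comp_nrm (c : Bool) {y : Term} (hy : Nrm y) :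
    ∃ n, Nrm n ∧ CMEq (comp (ltr c) y) n := by
  cases hy with
  | word w => exact ⟨wordTerm (c :: w), Nrm.word _, CMEq.refl _⟩
  | pair ha hb =>
      cases c
      · exact ⟨_, ha, CMEq.proj_left _ _⟩
      · exact ⟨_, hb, CMEq.proj_right _ _⟩

lemma word_comp_nrm (w : List Bool) : ∀ {y : Term}, Nrm y →
    ∃ n, Nrm n ∧ CMEq (comp (wordTerm w) y) n := by
  induction w with
  | nil => exact fun {y} hy => ⟨y, hy, CMEq.one_mul y⟩
  | cons c w ih =>
      intro y hy
      obtain ⟨n, hn, he⟩ := ih hy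
      obtain ⟨m, hm, he2⟩ := ltr_comp_nrm c hn
      refine ⟨m, hm, ?_⟩
      refine (CMEq.assoc _ _ _).trans ?_
      exact (CMEq.comp_congr (CMEq.refl _) he).trans he2

lemma comp_nrm : ∀ {x y : Term}, Nrm x → Nrm y →
    ∃ n, Nrm n ∧ CMEq (comp x y) n := by
  intro x y hx
  induction hx generalizing y with
  | word w => exact fun hy => word_comp_nrm w hy
  | pair ha hb iha ihb =>
      intro hy
      obtain ⟨n1, hn1, he1⟩ := iha hy
      obtain ⟨n2, hn2, he2⟩ := ihb hy
      refine ⟨Term.pair n1 n2, Nrm.pair hn1 hn2, ?_⟩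
      exact (CMEq.lift _ _ _).trans (CMEq.pair_congr he1 he2)

lemma normalize : ∀ t : Term, ∃ n, Nrm n ∧ CMEq t n := by
  intro t
  induction t with
  | I => exact ⟨wordTerm [], Nrm.word _, CMEq.refl _⟩
  | L => exact ⟨wordTerm [false], Nrm.word _, (CMEq.mul_one _).symm⟩
  | R => exact ⟨wordTerm [true], Nrm.word _, (CMEq.mul_one _).symm⟩
  | comp a b iha ihb =>
      obtain ⟨na, hna, hea⟩ := iha
      obtain ⟨nb, hnb, heb⟩ := ihb
      obtain ⟨n, hn, he⟩ := comp_nrm hna hnb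
      exact ⟨n, hn, (CMEq.comp_congr hea heb).trans he⟩
  | pair a b iha ihb =>
      obtain ⟨na, hna, hea⟩ := iha
      obtain ⟨nb, hnb, heb⟩ := ihb
      exact ⟨Term.pair na nb, Nrm.pair hna hnb, CMEq.pair_congr hea heb⟩

/-- number of pair nodes -/
def pc : Term → ℕ
  | Term.pair a b => pc a + pc b + 1
  | Term.comp a b => pc a + pc b
  | _ => 0

lemma pc_ltr (c : Bool) : pc (ltr c) = 0 := by cases c <;> rfl

lemma pc_word (w : List Bool) : pc (wordTerm w) = 0 := by
  induction w with
  | nil => rfl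
  | cons c w ih => simp [wordTerm, pc, pc_ltr, ih]

lemma nrm_pc_zero {M : Term} (h : Nrm M) (h0 : pc M = 0) : ∃ w, M = wordTerm w := by
  cases h with
  | word w => exact ⟨w, rfl⟩
  | pair ha hb => simp [pc] at h0

lemma peel_word (H : Term) (c : Bool) (A K T : Term)
    (h : CMEq (comp H (comp (comp (ltr c) A) K)) T) :
    CMEq (comp (comp H (ltr c)) (comp A K)) T :=
  (CMEq.assoc _ _ _).trans ((CMEq.comp_congr (CMEq.refl H) (CMEq.assoc _ _ _).symm).trans h)

lemma peel_pair (H : Term) (c : Bool) (A B K T : Term)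
    (h : CMEq (comp H (comp (cond c B A) K)) T) :
    CMEq (comp (comp H (ltr c)) (comp (Term.pair A B) K)) T := by
  refine (CMEq.assoc _ _ _).trans (CMEq.trans ?_ h)
  refine CMEq.comp_congr (CMEq.refl H) ?_
  refine (CMEq.comp_congr (CMEq.refl _) (CMEq.lift A B K)).trans ?_
  refine (ltr_pair c _ _).trans ?_
  cases c <;> exact CMEq.refl _

/-- the key separation induction -/
lemma sep : ∀ n : ℕ, ∀ M N : Term, Nrm M → Nrm N → pc M + pc N < n → ¬ CMEq M N →
    ∃ H K : Term, CMEq (comp H (comp M K)) Term.L ∧ CMEq (comp H (comp N K)) Term.R := by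
  intro n
  induction n with
  | zero => intro M N _ _ hlt; omega
  | succ n ih =>
      intro M N hM hN hlt hne
      cases hM with
      | word u =>
          cases hN with
          | word v =>
              refine sep_words u v ?_
              rintro rfl; exact hne (CMEq.refl _)
          | @pair N₁ N₂ hN₁ hN₂ =>
              have key : ¬ CMEq (wordTerm (false :: u)) N₁ ∨ ¬ CMEq (wordTerm (true :: u)) N₂ := by
                by_contra hc
                push_neg at hc
                exact hne ((CMEq.pair_congr hc.1.symm hc.2.symm).trans
                  (pair_LR (wordTerm u))).symm
              have hb : pc (Term.pair N₁ N₂) = pc N₁ + pc N₂ + 1 := rfl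
              have ha := pc_word u
              rcases key with hk | hk
              · obtain ⟨H, K, hL, hR⟩ := ih (wordTerm (false :: u)) N₁ (Nrm.word _) hN₁
                  (by rw [pc_word]; omega) hk
                exact ⟨comp H (ltr false), K, peel_word H false (wordTerm u) K Term.L hL,
                  peel_pair H false N₁ N₂ K Term.R hR⟩
              · obtain ⟨H, K, hL, hR⟩ := ih (wordTerm (true :: u)) N₂ (Nrm.word _) hN₂
                  (by rw [pc_word]; omega) hk
                exact ⟨comp H (ltr true), K, peel_word H true (wordTerm u) K Term.L hL,
                  peel_pair H true N₁ N₂ K Term.R hR⟩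
      | @pair M₁ M₂ hM₁ hM₂ =>
          have ha : pc (Term.pair M₁ M₂) = pc M₁ + pc M₂ + 1 := rfl
          cases hN with
          | word v =>
              have key : ¬ CMEq M₁ (wordTerm (false :: v)) ∨ ¬ CMEq M₂ (wordTerm (true :: v)) := by
                by_contra hc
                push_neg at hc
                exact hne ((CMEq.pair_congr hc.1 hc.2).trans (pair_LR (wordTerm v)))
              have hb := pc_word v
              rcases key with hk | hk
              · obtain ⟨H, K, hL, hR⟩ := ih M₁ (wordTerm (false :: v)) hM₁ (Nrm.word _)
                  (by rw [pc_word]; omega) hk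
                exact ⟨comp H (ltr false), K, peel_pair H false M₁ M₂ K Term.L hL,
                  peel_word H false (wordTerm v) K Term.R hR⟩
              · obtain ⟨H, K, hL, hR⟩ := ih M₂ (wordTerm (true :: v)) hM₂ (Nrm.word _)
                  (by rw [pc_word]; omega) hk
                exact ⟨comp H (ltr true), K, peel_pair H true M₁ M₂ K Term.L hL,
                  peel_word H true (wordTerm v) K Term.R hR⟩
          | @pair N₁ N₂ hN₁ hN₂ =>
              have hb : pc (Term.pair N₁ N₂) = pc N₁ + pc N₂ + 1 := rfl
              have key : ¬ CMEq M₁ N₁ ∨ ¬ CMEq M₂ N₂ := by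
                by_contra hc
                push_neg at hc
                exact hne (CMEq.pair_congr hc.1 hc.2)
              rcases key with hk | hk
              · obtain ⟨H, K, hL, hR⟩ := ih M₁ N₁ hM₁ hN₁ (by omega) hk
                exact ⟨comp H (ltr false), K, peel_pair H false M₁ M₂ K Term.L hL,
                  peel_pair H false N₁ N₂ K Term.R hR⟩
              · obtain ⟨H, K, hL, hR⟩ := ih M₂ N₂ hM₂ hN₂ (by omega) hk
                exact ⟨comp H (ltr true), K, peel_pair H true M₁ M₂ K Term.L hL,
                  peel_pair H true N₁ N₂ K Term.R hR⟩

end CMProof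

/-- Theorem 2 (simplicity of CM): if `F ≠ G` in the free Cartesian monoid
(equivalently, they have distinct normal forms w.r.t. (1)-(7)), then there are
`H`, `K` with `H*F*K = L` and `H*G*K = R` in CM. -/
theorem CM_simple (F G : Term) (h : ¬ CMEq F G) :
    ∃ H K : Term, CMEq (comp H (comp F K)) L ∧ CMEq (comp H (comp G K)) R := by
  obtain ⟨M, hM, heM⟩ := CMProof.normalize F
  obtain ⟨N, hN, heN⟩ := CMProof.normalize G
  have hne : ¬ CMEq M N := fun he => h ((heM.trans he).trans heN.symm)
  obtain ⟨H, K, hL, hR⟩ := CMProof.sep (CMProof.pc M + CMProof.pc N + 1) M N hM hN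
    (by omega) hne
  refine ⟨H, K, ?_, ?_⟩
  · exact (CMEq.comp_congr (CMEq.refl H) (CMEq.comp_congr heM (CMEq.refl K))).trans hL
  · exact (CMEq.comp_congr (CMEq.refl H) (CMEq.comp_congr heN (CMEq.refl K))).trans hR
end

section
/- (Proposition 1) The free categorical quasiproduct monoid CQ has exactly one proper non-trivial quotient, namely the free Cartesian monoid: every congruence θ on CQ (compatible with composition and pairing) that is strictly larger than equality and does not identify all elements coincides with the kernel of the canonical projection of CQ onto CM, i.e. with the congruence induced by =_CM. -/
open Term

/-! ### Auxiliary development for Proposition 1 -/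

section CQAux

/-- A letter: `true ↦ L`, `false ↦ R`. -/
def ltr : Bool → Term
  | true => L
  | false => R

/-- The term denoted by a word of letters (right-nested composition, `I` for `[]`). -/
def wordT : List Bool → Term
  | [] => I
  | c :: w => comp (ltr c) (wordT w)

/-- Iterated duplication: a perfect pair-tree of depth `n` with all leaves `a`. -/
def dup : ℕ → Term → Term
  | 0, a => a
  | n + 1, a => dup n (pair a a)

lemma dup_succ (n : ℕ) (a : Term) : dup (n + 1) a = pair (dup n a) (dup n a) := by
  induction n generalizing a with
  | zero => rfl
  | succ n ih => exact ih (pair a a)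

/-- CQ-normal forms: trees whose leaves are words of letters. -/
inductive NT : Type
  | leaf : List Bool → NT
  | node : NT → NT → NT
  deriving DecidableEq

/-- Act by a single letter on a normal form. -/
def stepN : Bool → NT → NT
  | c, NT.leaf v => NT.leaf (c :: v)
  | true, NT.node x _ => x
  | false, NT.node _ y => y

/-- Composition of a word with a normal form. -/
def compW : List Bool → NT → NT
  | [], z => z
  | c :: w, z => stepN c (compW w z)

/-- Composition of normal forms. -/
def compN : NT → NT → NT
  | NT.leaf w, z => compW w z
  | NT.node x y, z => NT.node (compN x z) (compN y z)

/-- The term denoted by a normal form. -/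
def decodeN : NT → Term
  | NT.leaf w => wordT w
  | NT.node x y => pair (decodeN x) (decodeN y)

/-- Size of a normal form (leaves count `1`). -/
def ntsize : NT → ℕ
  | NT.leaf _ => 1
  | NT.node x y => ntsize x + ntsize y + 1

lemma one_le_ntsize (x : NT) : 1 ≤ ntsize x := by
  cases x <;> simp [ntsize]

/-- The normal form of a term. -/
def nfT : Term → NT
  | I => NT.leaf []
  | L => NT.leaf [true]
  | R => NT.leaf [false]
  | comp a b => compN (nfT a) (nfT b)
  | pair a b => NT.node (nfT a) (nfT b)

lemma cq_step (c : Bool) (z : NT) :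
    CQEq (comp (ltr c) (decodeN z)) (decodeN (stepN c z)) := by
  cases z with
  | leaf v => cases c <;> exact CQEq.refl _
  | node x y =>
    cases c
    · exact CQEq.proj_right _ _
    · exact CQEq.proj_left _ _

lemma cq_compN (x y : NT) :
    CQEq (comp (decodeN x) (decodeN y)) (decodeN (compN x y)) := by
  induction x with
  | leaf w =>
    induction w with
    | nil => exact CQEq.one_mul _
    | cons c w ih =>
      exact (CQEq.assoc _ _ _).trans
        ((CQEq.comp_congr (CQEq.refl _) ih).trans (cq_step c _))
  | node a b iha ihb =>
    exact (CQEq.lift _ _ _).trans (CQEq.pair_congr iha ihb)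

lemma cq_nf (t : Term) : CQEq t (decodeN (nfT t)) := by
  induction t with
  | I => exact CQEq.refl _
  | L => exact (CQEq.mul_one L).symm
  | R => exact (CQEq.mul_one R).symm
  | comp a b iha ihb => exact (CQEq.comp_congr iha ihb).trans (cq_compN _ _)
  | pair a b iha ihb => exact CQEq.pair_congr iha ihb

lemma cq_cm {a b : Term} (h : CQEq a b) : CMEq a b := by
  induction h with
  | proj_left f g => exact CMEq.proj_left f g
  | proj_right f g => exact CMEq.proj_right f g
  | lift f g h => exact CMEq.lift f g h
  | assoc a b c => exact CMEq.assoc a b c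
  | one_mul a => exact CMEq.one_mul a
  | mul_one a => exact CMEq.mul_one a
  | refl a => exact CMEq.refl a
  | symm _ ih => exact ih.symm
  | trans _ _ ih1 ih2 => exact ih1.trans ih2
  | comp_congr _ _ ih1 ih2 => exact CMEq.comp_congr ih1 ih2
  | pair_congr _ _ ih1 ih2 => exact CMEq.pair_congr ih1 ih2

lemma cq_letterpair (c : Bool) (X Y : Term) :
    CQEq (comp (ltr c) (pair X Y)) (cond c X Y) := by
  cases c
  · exact CQEq.proj_right _ _
  · exact CQEq.proj_left _ _

lemma cq_concat (w : List Bool) (c : Bool) (z : Term) :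
    CQEq (comp (wordT (w ++ [c])) z) (comp (wordT w) (comp (ltr c) z)) := by
  induction w with
  | nil =>
    exact ((CQEq.assoc _ _ _).trans
      (CQEq.comp_congr (CQEq.refl _) (CQEq.one_mul z))).trans (CQEq.one_mul _).symm
  | cons c' w ih =>
    exact ((CQEq.assoc _ _ _).trans
      (CQEq.comp_congr (CQEq.refl _) ih)).trans (CQEq.assoc _ _ _).symm

lemma cq_word_dup (w : List Bool) : ∀ s : Term,
    CQEq (comp (wordT w) (dup w.length s)) s := by
  induction w with
  | nil => exact fun s => CQEq.one_mul s
  | cons c w ih =>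
    intro s
    have h1 : CQEq (comp (wordT (c :: w)) (dup (c :: w).length s))
        (comp (ltr c) (comp (wordT w) (dup w.length (pair s s)))) := CQEq.assoc _ _ _
    refine h1.trans ((CQEq.comp_congr (CQEq.refl _) (ih (pair s s))).trans ?_)
    cases c
    · exact CQEq.proj_right _ _
    · exact CQEq.proj_left _ _

lemma cq_pick (w : List Bool) (c : Bool) (X Y : Term) :
    CQEq (comp (wordT (w ++ [c])) (pair X Y)) (comp (wordT w) (cond c X Y)) :=
  (cq_concat w c _).trans (CQEq.comp_congr (CQEq.refl _) (cq_letterpair c X Y))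

lemma cq_strip (w : List Bool) (c : Bool) :
    CQEq (comp (wordT (w ++ [c])) (pair I I)) (wordT w) := by
  have h := cq_pick w c I I
  have h2 : CQEq (comp (wordT w) (cond c I I)) (wordT w) := by
    cases c <;> exact CQEq.mul_one _
  exact h.trans h2

lemma iter_word (j : ℕ) (c : Bool) :
    (fun x => comp (ltr c) x)^[j] I = wordT (List.replicate j c) := by
  induction j with
  | zero => rfl
  | succ j ih =>
    rw [Function.iterate_succ_apply', ih, List.replicate_succ]
    rfl

set_option linter.unusedSectionVars false

section Theta

variable (θ : Term → Term → Prop)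
variable (heq : Equivalence θ)
variable (hcomp : ∀ {a a' b b' : Term}, θ a a' → θ b b' → θ (comp a b) (comp a' b'))
variable (hpair : ∀ {a a' b b' : Term}, θ a a' → θ b b' → θ (pair a b) (pair a' b'))
variable (hCQ : ∀ a b : Term, CQEq a b → θ a b)

include heq hcomp hpair hCQ

/-- From `θ I ⟨b₁,b₂⟩` we get `θ ⟨L,R⟩ I`. -/
lemma pairIG {b₁ b₂ : Term} (h : θ I (pair b₁ b₂)) : θ (pair L R) I := by
  have h1 : θ L b₁ :=
    heq.trans (heq.symm (hCQ _ _ (CQEq.mul_one L)))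
      (heq.trans (hcomp (heq.refl L) h) (hCQ _ _ (CQEq.proj_left _ _)))
  have h2 : θ R b₂ :=
    heq.trans (heq.symm (hCQ _ _ (CQEq.mul_one R)))
      (heq.trans (hcomp (heq.refl R) h) (hCQ _ _ (CQEq.proj_right _ _)))
  exact heq.trans (hpair h1 h2) (heq.symm h)

lemma emptyG (v' : List Bool) (c : Bool) (h : θ I (wordT (v' ++ [c]))) :
    θ (pair L R) I := by
  set Z := dup (v'.length + 1) I with hZ
  have hlen : (v' ++ [c]).length = v'.length + 1 := by simp
  have hd : CQEq (comp (wordT (v' ++ [c])) Z) I := by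
    have := cq_word_dup (v' ++ [c]) I
    rwa [hlen] at this
  have h2 : θ Z I :=
    heq.trans (heq.symm (hCQ _ _ (CQEq.one_mul Z)))
      (heq.trans (hcomp h (heq.refl Z)) (hCQ _ _ hd))
  have h3 : θ I (pair (dup v'.length I) (dup v'.length I)) := by
    rw [hZ, dup_succ] at h2
    exact heq.symm h2
  exact pairIG θ heq hcomp hpair hCQ h3

lemma dlG (u' v' : List Bool)
    (h : θ (wordT (u' ++ [true])) (wordT (v' ++ [false]))) : θ (pair L R) I := by
  set X := dup u'.length I with hX
  set Y := dup v'.length (pair I I) with hY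
  have e1 : CQEq (comp (wordT (u' ++ [true])) (pair X Y)) I :=
    (cq_pick u' true X Y).trans (cq_word_dup u' I)
  have e2 : CQEq (comp (wordT (v' ++ [false])) (pair X Y)) (pair I I) :=
    (cq_pick v' false X Y).trans (cq_word_dup v' (pair I I))
  have h2 : θ I (pair I I) :=
    heq.trans (heq.symm (hCQ _ _ e1))
      (heq.trans (hcomp h (heq.refl (pair X Y))) (hCQ _ _ e2))
  exact pairIG θ heq hcomp hpair hCQ h2

lemma wordG : ∀ (n : ℕ) (u v : List Bool), u.length + v.length ≤ n → u ≠ v →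
    θ (wordT u) (wordT v) → θ (pair L R) I := by
  intro n
  induction n with
  | zero =>
    intro u v hl hne _
    cases u <;> cases v <;> simp_all
  | succ n ih =>
    intro u v hl hne h
    rcases List.eq_nil_or_concat u with hu | ⟨u', c, hu⟩
    · subst hu
      rcases List.eq_nil_or_concat v with hv | ⟨v', c', hv⟩
      · exact absurd hv.symm hne
      · rw [List.concat_eq_append] at hv
        subst hv
        exact emptyG θ heq hcomp hpair hCQ v' c' h
    · rw [List.concat_eq_append] at hu
      subst hu
      rcases List.eq_nil_or_concat v with hv | ⟨v', c', hv⟩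
      · subst hv
        exact emptyG θ heq hcomp hpair hCQ u' c (heq.symm h)
      · rw [List.concat_eq_append] at hv
        subst hv
        have hstrip : ∀ (w : List Bool) (d : Bool) (z : Term),
            θ (wordT (w ++ [d])) z → θ (wordT w) (comp z (pair I I)) := by
          intro w d z hz
          exact heq.trans (heq.symm (hCQ _ _ (cq_strip w d)))
            (hcomp hz (heq.refl (pair I I)))
        cases c <;> cases c'
        · -- both false
          have hs : θ (wordT u') (wordT v') :=
            heq.trans (hstrip u' false _ h)
              (heq.symm (hstrip v' false _ (heq.refl _)))
          have hne' : u' ≠ v' := fun e => hne (by rw [e])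
          have hl' : u'.length + v'.length ≤ n := by
            simp [List.length_append] at hl; omega
          exact ih u' v' hl' hne' hs
        · exact dlG θ heq hcomp hpair hCQ v' u' (heq.symm h)
        · exact dlG θ heq hcomp hpair hCQ u' v' h
        · -- both true
          have hs : θ (wordT u') (wordT v') :=
            heq.trans (hstrip u' true _ h)
              (heq.symm (hstrip v' true _ (heq.refl _)))
          have hne' : u' ≠ v' := fun e => hne (by rw [e])
          have hl' : u'.length + v'.length ≤ n := by
            simp [List.length_append] at hl; omega
          exact ih u' v' hl' hne' hs

lemma leafnodeG (u : List Bool) (b₁ b₂ : Term)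
    (h : θ (wordT u) (pair b₁ b₂)) : θ (pair L R) I := by
  cases u with
  | nil => exact pairIG θ heq hcomp hpair hCQ h
  | cons c w =>
    set Z := dup (c :: w).length I with hZ
    have hc : CQEq (comp (wordT (c :: w)) Z) I := cq_word_dup (c :: w) I
    have h2 : θ I (pair (comp b₁ Z) (comp b₂ Z)) :=
      heq.trans (heq.symm (hCQ _ _ hc))
        (heq.trans (hcomp h (heq.refl Z)) (hCQ _ _ (CQEq.lift b₁ b₂ Z)))
    exact pairIG θ heq hcomp hpair hCQ h2

lemma mainG : ∀ (n : ℕ) (X Y : NT), ntsize X + ntsize Y ≤ n → X ≠ Y →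
    θ (decodeN X) (decodeN Y) → θ (pair L R) I := by
  intro n
  induction n with
  | zero =>
    intro X Y hle _ _
    have := one_le_ntsize X
    have := one_le_ntsize Y
    omega
  | succ n ih =>
    intro X Y hle hne h
    cases X with
    | leaf u =>
      cases Y with
      | leaf v =>
        exact wordG θ heq hcomp hpair hCQ (u.length + v.length) u v le_rfl
          (fun e => hne (by rw [e])) h
      | node B₁ B₂ => exact leafnodeG θ heq hcomp hpair hCQ u _ _ h
    | node X₁ X₂ =>
      cases Y with
      | leaf v => exact leafnodeG θ heq hcomp hpair hCQ v _ _ (heq.symm h)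
      | node Y₁ Y₂ =>
        by_cases h1 : X₁ = Y₁
        · have h2 : X₂ ≠ Y₂ := fun e => hne (by rw [h1, e])
          have hd : θ (decodeN X₂) (decodeN Y₂) :=
            heq.trans (heq.symm (hCQ _ _ (CQEq.proj_right _ _)))
              (heq.trans (hcomp (heq.refl R) h) (hCQ _ _ (CQEq.proj_right _ _)))
          refine ih X₂ Y₂ ?_ h2 hd
          simp [ntsize] at hle ⊢
          omega
        · have hd : θ (decodeN X₁) (decodeN Y₁) :=
            heq.trans (heq.symm (hCQ _ _ (CQEq.proj_left _ _)))
              (heq.trans (hcomp (heq.refl L) h) (hCQ _ _ (CQEq.proj_left _ _)))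
          refine ih X₁ Y₁ ?_ h1 hd
          simp [ntsize] at hle ⊢
          omega

/-- Peeling a pair-tower with left/right compositions. -/
lemma peel : ∀ (j : ℕ) (a t : Term) (c : Bool),
    θ (dup j a) t → θ a ((fun x => comp (ltr c) x)^[j] t) := by
  intro j
  induction j with
  | zero => intro a t c h; exact h
  | succ j ihj =>
    intro a t c h
    rw [dup_succ] at h
    have h2 : θ (dup j a) (comp (ltr c) t) := by
      refine heq.trans (heq.symm ?_) (hcomp (heq.refl (ltr c)) h)
      cases c
      · exact hCQ _ _ (CQEq.proj_right _ _)
      · exact hCQ _ _ (CQEq.proj_left _ _)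
    have h3 := ihj a (comp (ltr c) t) c h2
    rw [Function.iterate_succ_apply]
    exact h3

lemma w2tot (u' v' : List Bool)
    (h : θ (wordT (u' ++ [true])) (wordT (v' ++ [false]))) :
    ∀ s t : Term, θ s t := by
  intro s t
  have e1 : CQEq (comp (wordT (u' ++ [true]))
      (pair (dup u'.length s) (dup v'.length t))) s :=
    (cq_pick u' true _ _).trans (cq_word_dup u' s)
  have e2 : CQEq (comp (wordT (v' ++ [false]))
      (pair (dup u'.length s) (dup v'.length t))) t :=
    (cq_pick v' false _ _).trans (cq_word_dup v' t)
  exact heq.trans (heq.symm (hCQ _ _ e1))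
    (heq.trans (hcomp h (heq.refl _)) (hCQ _ _ e2))

lemma w3tot (v' : List Bool) (c : Bool) (h : θ I (wordT (v' ++ [c]))) :
    ∀ s t : Term, θ s t := by
  have hlen : (v' ++ [c]).length = v'.length + 1 := by simp
  have step1 : ∀ a : Term, θ (dup (v'.length + 1) a) a := by
    intro a
    have hd : CQEq (comp (wordT (v' ++ [c])) (dup (v'.length + 1) a)) a := by
      have := cq_word_dup (v' ++ [c]) a
      rwa [hlen] at this
    exact heq.trans (heq.symm (hCQ _ _ (CQEq.one_mul _)))
      (heq.trans (hcomp h (heq.refl _)) (hCQ _ _ hd))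
  have hL : θ I (wordT (List.replicate (v'.length + 1) true)) := by
    have := peel θ heq hcomp hpair hCQ (v'.length + 1) I I true (step1 I)
    rwa [iter_word] at this
  have hR : θ I (wordT (List.replicate (v'.length + 1) false)) := by
    have := peel θ heq hcomp hpair hCQ (v'.length + 1) I I false (step1 I)
    rwa [iter_word] at this
  have h2 : θ (wordT (List.replicate v'.length true ++ [true]))
      (wordT (List.replicate v'.length false ++ [false])) := by
    rw [← List.replicate_succ', ← List.replicate_succ']
    exact heq.trans (heq.symm hL) hR
  exact w2tot θ heq hcomp hpair hCQ _ _ h2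

lemma wordTot : ∀ (n : ℕ) (u v : List Bool), u.length + v.length ≤ n → u ≠ v →
    θ (wordT u) (wordT v) → ∀ s t : Term, θ s t := by
  intro n
  induction n with
  | zero =>
    intro u v hl hne _
    cases u <;> cases v <;> simp_all
  | succ n ih =>
    intro u v hl hne h
    rcases List.eq_nil_or_concat u with hu | ⟨u', c, hu⟩
    · subst hu
      rcases List.eq_nil_or_concat v with hv | ⟨v', c', hv⟩
      · exact absurd hv.symm hne
      · rw [List.concat_eq_append] at hv
        subst hv
        exact w3tot θ heq hcomp hpair hCQ v' c' h
    · rw [List.concat_eq_append] at hu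
      subst hu
      rcases List.eq_nil_or_concat v with hv | ⟨v', c', hv⟩
      · subst hv
        exact w3tot θ heq hcomp hpair hCQ u' c (heq.symm h)
      · rw [List.concat_eq_append] at hv
        subst hv
        have hstrip : ∀ (w : List Bool) (d : Bool) (z : Term),
            θ (wordT (w ++ [d])) z → θ (wordT w) (comp z (pair I I)) := by
          intro w d z hz
          exact heq.trans (heq.symm (hCQ _ _ (cq_strip w d)))
            (hcomp hz (heq.refl (pair I I)))
        cases c <;> cases c'
        · have hs : θ (wordT u') (wordT v') :=
            heq.trans (hstrip u' false _ h)
              (heq.symm (hstrip v' false _ (heq.refl _)))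
          have hne' : u' ≠ v' := fun e => hne (by rw [e])
          have hl' : u'.length + v'.length ≤ n := by
            simp [List.length_append] at hl; omega
          exact ih u' v' hl' hne' hs
        · exact w2tot θ heq hcomp hpair hCQ v' u' (heq.symm h)
        · exact w2tot θ heq hcomp hpair hCQ u' v' h
        · have hs : θ (wordT u') (wordT v') :=
            heq.trans (hstrip u' true _ h)
              (heq.symm (hstrip v' true _ (heq.refl _)))
          have hne' : u' ≠ v' := fun e => hne (by rw [e])
          have hl' : u'.length + v'.length ≤ n := by
            simp [List.length_append] at hl; omega
          exact ih u' v' hl' hne' hs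

lemma mainTot : ∀ (n : ℕ) (X Y : NT), ntsize X + ntsize Y ≤ n →
    ¬ CMEq (decodeN X) (decodeN Y) → θ (decodeN X) (decodeN Y) →
    ∀ s t : Term, θ s t := by
  intro n
  induction n with
  | zero =>
    intro X Y hle _ _
    have := one_le_ntsize X
    have := one_le_ntsize Y
    omega
  | succ n ih =>
    have key : ∀ (u : List Bool) (B₁ B₂ : NT),
        ntsize B₁ + ntsize B₂ + 2 ≤ n + 1 →
        ¬ CMEq (wordT u) (pair (decodeN B₁) (decodeN B₂)) →
        θ (wordT u) (pair (decodeN B₁) (decodeN B₂)) → ∀ s t : Term, θ s t := by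
      intro u B₁ B₂ hle hne h
      have hdL : θ (wordT (true :: u)) (decodeN B₁) :=
        heq.trans (hcomp (heq.refl L) h) (hCQ _ _ (CQEq.proj_left _ _))
      have hdR : θ (wordT (false :: u)) (decodeN B₂) :=
        heq.trans (hcomp (heq.refl R) h) (hCQ _ _ (CQEq.proj_right _ _))
      by_cases h1 : CMEq (wordT (true :: u)) (decodeN B₁)
      · have h2 : ¬ CMEq (wordT (false :: u)) (decodeN B₂) := by
          intro h2
          apply hne
          have e1 : CMEq (pair (decodeN B₁) (decodeN B₂))
              (pair (comp L (wordT u)) (comp R (wordT u))) :=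
            CMEq.pair_congr h1.symm h2.symm
          have e2 : CMEq (pair (comp L (wordT u)) (comp R (wordT u))) (wordT u) :=
            ((CMEq.lift L R (wordT u)).symm).trans
              ((CMEq.comp_congr CMEq.surj (CMEq.refl _)).trans (CMEq.one_mul _))
          exact (e1.trans e2).symm
        refine ih (NT.leaf (false :: u)) B₂ ?_ h2 hdR
        simp [ntsize]
        omega
      · refine ih (NT.leaf (true :: u)) B₁ ?_ h1 hdL
        simp [ntsize]
        omega
    intro X Y hle hne h
    cases X with
    | leaf u =>
      cases Y with
      | leaf v =>
        by_cases e : u = v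
        · subst e; exact absurd (CMEq.refl _) hne
        · exact wordTot θ heq hcomp hpair hCQ (u.length + v.length) u v le_rfl e h
      | node B₁ B₂ =>
        refine key u B₁ B₂ ?_ hne h
        simp [ntsize] at hle; omega
    | node X₁ X₂ =>
      cases Y with
      | leaf v =>
        refine key v X₁ X₂ ?_ (fun hc => hne hc.symm) (heq.symm h)
        simp [ntsize] at hle; omega
      | node Y₁ Y₂ =>
        by_cases h1 : CMEq (decodeN X₁) (decodeN Y₁)
        · have h2 : ¬ CMEq (decodeN X₂) (decodeN Y₂) :=
            fun e => hne (CMEq.pair_congr h1 e)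
          have hd : θ (decodeN X₂) (decodeN Y₂) :=
            heq.trans (heq.symm (hCQ _ _ (CQEq.proj_right _ _)))
              (heq.trans (hcomp (heq.refl R) h) (hCQ _ _ (CQEq.proj_right _ _)))
          refine ih X₂ Y₂ ?_ h2 hd
          simp [ntsize] at hle ⊢; omega
        · have hd : θ (decodeN X₁) (decodeN Y₁) :=
            heq.trans (heq.symm (hCQ _ _ (CQEq.proj_left _ _)))
              (heq.trans (hcomp (heq.refl L) h) (hCQ _ _ (CQEq.proj_left _ _)))
          refine ih X₁ Y₁ ?_ h1 hd
          simp [ntsize] at hle ⊢; omega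

end Theta

end CQAux

/-- Proposition 1: every congruence on CQ (given as a congruence on terms
containing `=_CQ`) that is strictly larger than equality on CQ and does not
identify all elements coincides with the congruence induced by `=_CM`;
so CM is the unique proper non-trivial quotient of CQ. -/
theorem CQ_almost_simple (θ : Term → Term → Prop)
    (heq : Equivalence θ)
    (hcomp : ∀ {a a' b b' : Term}, θ a a' → θ b b' → θ (comp a b) (comp a' b'))
    (hpair : ∀ {a a' b b' : Term}, θ a a' → θ b b' → θ (pair a b) (pair a' b'))
    (hCQ : ∀ a b : Term, CQEq a b → θ a b)
    (hproper : ∃ a b : Term, θ a b ∧ ¬ CQEq a b)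
    (hnontrivial : ∃ a b : Term, ¬ θ a b) :
    ∀ a b : Term, θ a b ↔ CMEq a b := by
  obtain ⟨a₀, b₀, hab, hncq⟩ := hproper
  have hnfne : nfT a₀ ≠ nfT b₀ := by
    intro e
    apply hncq
    exact (cq_nf a₀).trans (by rw [e]; exact (cq_nf b₀).symm)
  have hθn : θ (decodeN (nfT a₀)) (decodeN (nfT b₀)) :=
    heq.trans (heq.symm (hCQ _ _ (cq_nf a₀))) (heq.trans hab (hCQ _ _ (cq_nf b₀)))
  have hLR : θ (pair L R) I :=
    mainG θ heq hcomp hpair hCQ _ _ _ le_rfl hnfne hθn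
  have cm_sub : ∀ a b : Term, CMEq a b → θ a b := by
    intro a b h
    induction h with
    | proj_left f g => exact hCQ _ _ (CQEq.proj_left f g)
    | proj_right f g => exact hCQ _ _ (CQEq.proj_right f g)
    | lift f g h => exact hCQ _ _ (CQEq.lift f g h)
    | surj => exact hLR
    | assoc a b c => exact hCQ _ _ (CQEq.assoc a b c)
    | one_mul a => exact hCQ _ _ (CQEq.one_mul a)
    | mul_one a => exact hCQ _ _ (CQEq.mul_one a)
    | refl a => exact heq.refl a
    | symm _ ih => exact heq.symm ih
    | trans _ _ ih1 ih2 => exact heq.trans ih1 ih2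
    | comp_congr _ _ ih1 ih2 => exact hcomp ih1 ih2
    | pair_congr _ _ ih1 ih2 => exact hpair ih1 ih2
  intro a b
  constructor
  · intro h
    by_contra hcm
    have hnen : ¬ CMEq (decodeN (nfT a)) (decodeN (nfT b)) := by
      intro e
      apply hcm
      exact (cq_cm (cq_nf a)).trans (e.trans (cq_cm (cq_nf b)).symm)
    have hθn' : θ (decodeN (nfT a)) (decodeN (nfT b)) :=
      heq.trans (heq.symm (hCQ _ _ (cq_nf a))) (heq.trans h (hCQ _ _ (cq_nf b)))
    have tot := mainTot θ heq hcomp hpair hCQ _ _ _ le_rfl hnen hθn'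
    obtain ⟨s, t, hst⟩ := hnontrivial
    exact hst (tot s t)
  · exact cm_sub a b
end
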